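/- arXiv:1812.02974 — 14 statements merged into one kernel-verified Lean document; each statement's English description precedes it below -/
import Mathlib

section
/- Let n ≥ 1 and let s, y ∈ ℝⁿ satisfy sᵀy > 0. Then for every τ ∈ [0,1] there exists α with αBB2 ≤ α ≤ αBB1 such that ψ(τ, α) = 0. -/
theorem stmt_0 (n : ℕ) (hn : 1 ≤ n) (s y : Fin n → ℝ)
    (hsy : 0 < ∑ i, s i * y i)
    (aBB1 aBB2 : ℝ)
    (h1 : aBB1 = (∑ i, s i * s i) / (∑ i, s i * y i))
    (h2 : aBB2 = (∑ i, s i * y i) / (∑ i, y i * y i))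
    (ψ : ℝ → ℝ → ℝ)
    (hψ : ∀ τ α : ℝ, ψ τ α =
      (1 - τ) * (∑ i, y i * y i) * (α ^ 3 - α ^ 2 * aBB2)
        + τ * (∑ i, s i * y i) * (α - aBB1)) :
    ∀ τ ∈ Set.Icc (0 : ℝ) 1, ∃ α : ℝ, aBB2 ≤ α ∧ α ≤ aBB1 ∧ ψ τ α = 0 := by
  intro τ hτ
  obtain ⟨hτ0, hτ1⟩ := hτ
  set S : ℝ := ∑ i, s i * y i with hS
  set Y : ℝ := ∑ i, y i * y i with hY
  set X : ℝ := ∑ i, s i * s i with hX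
  have hYpos : 0 < Y := by
    rcases lt_or_ge 0 Y with h | h
    · exact h
    · exfalso
      have hy : ∀ i, y i = 0 := by
        intro i
        have hnn : ∀ i ∈ Finset.univ, (0:ℝ) ≤ y i * y i := fun i _ => mul_self_nonneg _
        have := Finset.sum_nonneg hnn
        have hY0 : Y = 0 := le_antisymm h this
        have := (Finset.sum_eq_zero_iff_of_nonneg hnn).mp hY0 i (Finset.mem_univ i)
        exact mul_self_eq_zero.mp this
      have : S = 0 := by
        simp [hS, hy]
      linarith
  have hcs : S ^ 2 ≤ X * Y := by
    -- fallback: use sum_mul_sq_le_sq_mul_sq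
    have h := Finset.sum_mul_sq_le_sq_mul_sq Finset.univ s y
    calc S ^ 2 = (∑ i, s i * y i) ^ 2 := by rw [hS]
      _ ≤ (∑ i, s i ^ 2) * (∑ i, y i ^ 2) := h
      _ = X * Y := by rw [hX, hY]; congr 1 <;> exact Finset.sum_congr rfl (by intros; ring)
  have hle : aBB2 ≤ aBB1 := by
    rw [h1, h2, div_le_div_iff₀ hYpos hsy]
    nlinarith
  have h2pos : 0 < aBB2 := by
    rw [h2]; positivity
  -- values at endpoints
  have hleft : ψ τ aBB2 ≤ 0 := by
    rw [hψ]
    have : aBB2 ^ 3 - aBB2 ^ 2 * aBB2 = 0 := by ring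
    rw [this]
    have : τ * S * (aBB2 - aBB1) ≤ 0 :=
      mul_nonpos_of_nonneg_of_nonpos (by positivity) (by linarith)
    linarith
  have hright : 0 ≤ ψ τ aBB1 := by
    rw [hψ]
    have h0 : aBB1 - aBB1 = 0 := by ring
    have : aBB1 ^ 3 - aBB1 ^ 2 * aBB2 = aBB1 ^ 2 * (aBB1 - aBB2) := by ring
    rw [h0, this]
    have : 0 ≤ (1 - τ) * Y * (aBB1 ^ 2 * (aBB1 - aBB2)) := by
      apply mul_nonneg (mul_nonneg (by linarith) hYpos.le)
      apply mul_nonneg (sq_nonneg _) (by linarith)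
    linarith
  have hcont : ContinuousOn (ψ τ) (Set.Icc aBB2 aBB1) := by
    have : ψ τ = fun α => (1 - τ) * Y * (α ^ 3 - α ^ 2 * aBB2) + τ * S * (α - aBB1) := by
      funext α; rw [hψ]
    rw [this]
    fun_prop
  have := intermediate_value_Icc hle hcont
  have h0mem : (0:ℝ) ∈ Set.Icc (ψ τ aBB2) (ψ τ aBB1) := ⟨hleft, hright⟩
  obtain ⟨α, hαmem, hαval⟩ := this h0mem
  exact ⟨α, hαmem.1, hαmem.2, hαval⟩
end

section
/- Let n ≥ 1 and let s, y ∈ ℝⁿ satisfy sᵀy > 0, and let τ ∈ [0,1]. If α₁ and α₂ both lie in the interval [αBB2, αBB1] and satisfy ψ(τ, α₁) = 0 and ψ(τ, α₂) = 0, then α₁ = α₂; i.e., ψ(τ, ·) has a unique root in [αBB2, αBB1]. -/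
theorem stmt_1 (n : ℕ) (hn : 1 ≤ n) (s y : Fin n → ℝ)
    (hsy : 0 < ∑ i, s i * y i)
    (aBB1 aBB2 : ℝ)
    (h1 : aBB1 = (∑ i, s i * s i) / (∑ i, s i * y i))
    (h2 : aBB2 = (∑ i, s i * y i) / (∑ i, y i * y i))
    (ψ : ℝ → ℝ → ℝ)
    (hψ : ∀ τ α : ℝ, ψ τ α =
      (1 - τ) * (∑ i, y i * y i) * (α ^ 3 - α ^ 2 * aBB2)
        + τ * (∑ i, s i * y i) * (α - aBB1))
    (τ : ℝ) (hτ : τ ∈ Set.Icc (0 : ℝ) 1)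
    (α₁ α₂ : ℝ)
    (hα₁ : α₁ ∈ Set.Icc aBB2 aBB1) (hα₂ : α₂ ∈ Set.Icc aBB2 aBB1)
    (hr₁ : ψ τ α₁ = 0) (hr₂ : ψ τ α₂ = 0) :
    α₁ = α₂ := by
  set S := ∑ i, s i * y i with hS
  set Y := ∑ i, y i * y i with hY
  have hcs : S ^ 2 ≤ (∑ i, s i * s i) * Y := by
    have := Finset.sum_mul_sq_le_sq_mul_sq Finset.univ s y
    simpa [hS, hY, sq] using this
  have hYpos : 0 < Y := by
    rcases lt_or_ge 0 Y with h | h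
    · exact h
    · have hss : 0 ≤ ∑ i, s i * s i := Finset.sum_nonneg fun i _ => mul_self_nonneg (s i)
      nlinarith [pow_pos hsy 2, mul_nonpos_of_nonneg_of_nonpos hss h]
  have ha2pos : 0 < aBB2 := by
    rw [h2]; positivity
  rw [hψ] at hr₁ hr₂
  obtain ⟨h1l, h1r⟩ := hα₁
  obtain ⟨h2l, h2r⟩ := hα₂
  obtain ⟨hτ0, hτ1⟩ := hτ
  have key : (α₁ - α₂) *
      ((1 - τ) * Y * (α₁ ^ 2 + α₁ * α₂ + α₂ ^ 2 - aBB2 * (α₁ + α₂)) + τ * S) = 0 := by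
    linear_combination hr₁ - hr₂
  have hin : aBB2 ^ 2 ≤ α₁ ^ 2 + α₁ * α₂ + α₂ ^ 2 - aBB2 * (α₁ + α₂) := by
    nlinarith [mul_nonneg (sub_nonneg.2 h1l) (ha2pos.trans_le h1l).le,
      mul_nonneg (sub_nonneg.2 h2l) (ha2pos.trans_le h2l).le,
      mul_pos (ha2pos.trans_le h1l) (ha2pos.trans_le h2l)]
  have hBpos : 0 < (1 - τ) * Y * (α₁ ^ 2 + α₁ * α₂ + α₂ ^ 2 - aBB2 * (α₁ + α₂)) + τ * S := by
    rcases eq_or_lt_of_le hτ1 with h | h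
    · subst h; nlinarith [hsy]
    · nlinarith [mul_pos (mul_pos (sub_pos.2 h) hYpos) (ha2pos.trans_le (by nlinarith : aBB2 ≤ aBB2)),
        mul_nonneg hτ0 hsy.le, mul_pos (sub_pos.2 h) hYpos, sq_nonneg aBB2,
        mul_pos (mul_pos (sub_pos.2 h) hYpos) (pow_pos ha2pos 2)]
  have := mul_eq_zero.1 key
  rcases this with h | h
  · linarith [sub_eq_zero.1 h]
  · exact absurd h hBpos.ne'
end

section
/- Let n ≥ 1 and let s, y ∈ ℝⁿ satisfy sᵀy > 0. Let τ₁, τ₂ ∈ [0,1] with τ₁ ≤ τ₂, and let α₁, α₂ ∈ [αBB2, αBB1] satisfy ψ(τ₁, α₁) = 0 and ψ(τ₂, α₂) = 0. Then α₁ ≤ α₂; i.e., the root of ψ(τ, ·) = 0 in [αBB2, αBB1] is monotone (nondecreasing) in τ. -/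
theorem stmt_2 (n : ℕ) (hn : 1 ≤ n) (s y : Fin n → ℝ)
    (hsy : 0 < ∑ i, s i * y i)
    (aBB1 aBB2 : ℝ)
    (h1 : aBB1 = (∑ i, s i * s i) / (∑ i, s i * y i))
    (h2 : aBB2 = (∑ i, s i * y i) / (∑ i, y i * y i))
    (ψ : ℝ → ℝ → ℝ)
    (hψ : ∀ τ α : ℝ, ψ τ α =
      (1 - τ) * (∑ i, y i * y i) * (α ^ 3 - α ^ 2 * aBB2)
        + τ * (∑ i, s i * y i) * (α - aBB1))
    (τ₁ τ₂ : ℝ) (hτ₁ : τ₁ ∈ Set.Icc (0 : ℝ) 1) (hτ₂ : τ₂ ∈ Set.Icc (0 : ℝ) 1)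
    (hττ : τ₁ ≤ τ₂)
    (α₁ α₂ : ℝ)
    (hα₁ : α₁ ∈ Set.Icc aBB2 aBB1) (hα₂ : α₂ ∈ Set.Icc aBB2 aBB1)
    (hr₁ : ψ τ₁ α₁ = 0) (hr₂ : ψ τ₂ α₂ = 0) :
    α₁ ≤ α₂ := by
  by_contra hcon
  push_neg at hcon
  set A := ∑ i, y i * y i with hAdef
  set B := ∑ i, s i * y i with hBdef
  have hA : 0 < A := by
    rcases (Finset.sum_nonneg (fun i _ => mul_self_nonneg (y i))).lt_or_eq with h | h
    · exact h
    · exfalso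
      have hzero : ∀ i ∈ Finset.univ, y i * y i = 0 :=
        (Finset.sum_eq_zero_iff_of_nonneg (fun i _ => mul_self_nonneg (y i))).mp h.symm
      have : ∀ i, y i = 0 := fun i => by
        have := hzero i (Finset.mem_univ i)
        nlinarith [sq_nonneg (y i)]
      simp [hBdef, this] at hsy
  have hc : 0 < aBB2 := by rw [h2]; exact div_pos hsy hA
  rw [hψ] at hr₁ hr₂
  have hc1 : aBB2 ≤ α₁ := hα₁.1
  have hc2 : aBB2 ≤ α₂ := hα₂.1
  have hd1 : α₁ ≤ aBB1 := hα₁.2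
  have key1 : (1 - τ₂) * A * (α₁ ^ 3 - α₁ ^ 2 * aBB2) + τ₂ * B * (α₁ - aBB1) ≤ 0 := by
    nlinarith [mul_nonneg (sub_nonneg.2 hττ)
        (mul_nonneg (mul_nonneg hA.le (sq_nonneg α₁)) (sub_nonneg.2 hc1)),
      mul_nonneg (sub_nonneg.2 hττ) (mul_nonneg hsy.le (sub_nonneg.2 hd1))]
  -- strict monotonicity in α
  have hQ : α₁ ^ 2 + α₁ * α₂ + α₂ ^ 2 - aBB2 * (α₁ + α₂) ≥ aBB2 ^ 2 := by
    nlinarith [mul_nonneg (sub_nonneg.2 hc1) (le_trans hc.le hc1),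
      mul_nonneg (sub_nonneg.2 hc2) (le_trans hc.le hc2),
      mul_le_mul hc1 hc2 hc.le (le_trans hc.le hc1)]
  have hτ2a : 0 ≤ 1 - τ₂ := by linarith [hτ₂.2]
  have hτ2b : 0 ≤ τ₂ := hτ₂.1
  have hpos : 0 < (1 - τ₂) * A * (α₁ ^ 3 - α₁ ^ 2 * aBB2) + τ₂ * B * (α₁ - aBB1)
      - ((1 - τ₂) * A * (α₂ ^ 3 - α₂ ^ 2 * aBB2) + τ₂ * B * (α₂ - aBB1)) := by
    have hdiff : (1 - τ₂) * A * (α₁ ^ 3 - α₁ ^ 2 * aBB2) + τ₂ * B * (α₁ - aBB1)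
        - ((1 - τ₂) * A * (α₂ ^ 3 - α₂ ^ 2 * aBB2) + τ₂ * B * (α₂ - aBB1))
        = (α₁ - α₂) * ((1 - τ₂) * A * (α₁ ^ 2 + α₁ * α₂ + α₂ ^ 2 - aBB2 * (α₁ + α₂))
            + τ₂ * B) := by ring
    rw [hdiff]
    have h12 : α₁ - α₂ > 0 := by linarith
    have : 0 < (1 - τ₂) * A * (α₁ ^ 2 + α₁ * α₂ + α₂ ^ 2 - aBB2 * (α₁ + α₂)) + τ₂ * B := by
      rcases lt_or_ge τ₂ 1 with h | h
      · have h1t : 0 < 1 - τ₂ := by linarith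
        have : 0 < (1 - τ₂) * A * aBB2 ^ 2 := mul_pos (mul_pos h1t hA) (pow_pos hc 2)
        nlinarith [mul_le_mul_of_nonneg_left hQ (mul_nonneg hτ2a hA.le)]
      · have hτ21 : τ₂ = 1 := le_antisymm hτ₂.2 h
        rw [hτ21]
        have := mul_nonneg (mul_nonneg hτ2a hA.le)
          (by nlinarith : (0:ℝ) ≤ α₁ ^ 2 + α₁ * α₂ + α₂ ^ 2 - aBB2 * (α₁ + α₂))
        nlinarith
    exact mul_pos h12 this
  linarith [key1, hr₂, hpos]
end

section
/- Let n ≥ 1 and let s, y ∈ ℝⁿ satisfy sᵀy > 0, and let τ ∈ [0,1]. Define φ_τ(α) = ‖τ(α⁻¹ s − y) + (1−τ)(s − α y)‖² for α ≠ 0, where ‖·‖ is the Euclidean norm. Then for every α > 0, the derivative of φ_τ at α equals (2(τ + (1−τ)α)/α³)·ψ(τ, α). In particular, for α > 0, φ_τ′(α) = 0 if and only if ψ(τ, α) = 0. -/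
theorem stmt_3 (n : ℕ) (hn : 1 ≤ n) (s y : EuclideanSpace ℝ (Fin n))
    (hsy : 0 < (@inner ℝ _ _ s y))
    (aBB1 aBB2 : ℝ)
    (h1 : aBB1 = (@inner ℝ _ _ s s) / (@inner ℝ _ _ s y))
    (h2 : aBB2 = (@inner ℝ _ _ s y) / (@inner ℝ _ _ y y))
    (ψ : ℝ → ℝ → ℝ)
    (hψ : ∀ τ α : ℝ, ψ τ α =
      (1 - τ) * (@inner ℝ _ _ y y) * (α ^ 3 - α ^ 2 * aBB2)
        + τ * (@inner ℝ _ _ s y) * (α - aBB1))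
    (τ : ℝ) (hτ : τ ∈ Set.Icc (0 : ℝ) 1)
    (φ : ℝ → ℝ)
    (hφ : ∀ α : ℝ, α ≠ 0 →
      φ α = ‖τ • (α⁻¹ • s - y) + (1 - τ) • (s - α • y)‖ ^ 2) :
    ∀ α : ℝ, 0 < α →
      HasDerivAt φ ((2 * (τ + (1 - τ) * α) / α ^ 3) * ψ τ α) α ∧
      (deriv φ α = 0 ↔ ψ τ α = 0) := by
  intro α hα
  have hα0 : α ≠ 0 := ne_of_gt hα
  have hy : y ≠ 0 := by rintro rfl; simp at hsy
  have hP0 : (@inner ℝ _ _ s y : ℝ) ≠ 0 := ne_of_gt hsy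
  have hY0 : (@inner ℝ _ _ y y : ℝ) ≠ 0 := fun h => hy (inner_self_eq_zero.mp h)
  have hψα : ψ τ α = (1-τ)*(@inner ℝ _ _ y y)*α^3 - (1-τ)*(@inner ℝ _ _ s y)*α^2
      + τ*(@inner ℝ _ _ s y)*α - τ*(@inner ℝ _ _ s s) := by
    have key : ∀ S P Y : ℝ, P ≠ 0 → Y ≠ 0 →
        (1-τ)*Y*(α^3 - α^2*(P/Y)) + τ*P*(α - S/P)
          = (1-τ)*Y*α^3 - (1-τ)*P*α^2 + τ*P*α - τ*S := by
      intro S P Y hP hY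
      field_simp
      ring
    rw [hψ, h1, h2]
    exact key _ _ _ hP0 hY0
  have hφeq : ∀ x : ℝ, x ≠ 0 → φ x =
      (τ/x + (1-τ))^2 * (@inner ℝ _ _ s s)
        - 2*((τ/x + (1-τ))*(τ + (1-τ)*x)) * (@inner ℝ _ _ s y)
        + (τ + (1-τ)*x)^2 * (@inner ℝ _ _ y y) := by
    intro x hx
    rw [hφ x hx]
    have hv : τ • (x⁻¹ • s - y) + (1 - τ) • (s - x • y)
        = (τ/x + (1-τ)) • s - (τ + (1-τ)*x) • y := by
      simp only [smul_sub, smul_smul, div_eq_mul_inv]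
      module
    rw [hv, ← real_inner_self_eq_norm_sq]
    simp only [inner_sub_left, inner_sub_right, real_inner_smul_left, real_inner_smul_right,
      real_inner_comm y s]
    ring
  have hc : HasDerivAt (fun x : ℝ => τ/x + (1-τ)) (-τ/α^2) α := by
    have h := ((hasDerivAt_inv hα0).const_mul τ).add_const (1-τ)
    simp only [div_eq_mul_inv]
    refine h.congr_deriv ?_
    ring
  have hd : HasDerivAt (fun x : ℝ => τ + (1-τ)*x) (1-τ) α := by
    simpa using ((hasDerivAt_id α).const_mul (1-τ)).const_add τ
  have hg : HasDerivAt (fun x : ℝ =>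
      (τ/x + (1-τ))^2 * (@inner ℝ _ _ s s)
        - 2*((τ/x + (1-τ))*(τ + (1-τ)*x)) * (@inner ℝ _ _ s y)
        + (τ + (1-τ)*x)^2 * (@inner ℝ _ _ y y))
      ((2 * (τ + (1 - τ) * α) / α ^ 3) * ψ τ α) α := by
    have hA := (hc.pow 2).mul_const (@inner ℝ _ _ s s)
    have hB := ((hc.mul hd).const_mul 2).mul_const (@inner ℝ _ _ s y)
    have hC := (hd.pow 2).mul_const (@inner ℝ _ _ y y)
    refine ((hA.sub hB).add hC).congr_deriv ?_
    rw [hψα]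
    generalize (@inner ℝ _ _ s s : ℝ) = S
    generalize (@inner ℝ _ _ s y : ℝ) = P
    generalize (@inner ℝ _ _ y y : ℝ) = Y
    simp only [Nat.cast_ofNat, Nat.add_one_sub_one, pow_one]
    field_simp
    ring
  have hφ' : HasDerivAt φ ((2 * (τ + (1 - τ) * α) / α ^ 3) * ψ τ α) α := by
    apply hg.congr_of_eventuallyEq
    filter_upwards [eventually_ne_nhds hα0] with x hx using hφeq x hx
  refine ⟨hφ', ?_⟩
  rw [hφ'.deriv]
  have hb : 0 < τ + (1-τ)*α := by
    obtain ⟨hτ0, hτ1⟩ := hτ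
    rcases hτ0.eq_or_lt with h | h
    · simp [← h]; linarith
    · have : 0 ≤ (1-τ)*α := mul_nonneg (by linarith) hα.le
      linarith
  have hcoef : (2 * (τ + (1 - τ) * α) / α ^ 3) ≠ 0 :=
    ne_of_gt (div_pos (by linarith) (pow_pos hα 3))
  constructor
  · intro h
    rcases mul_eq_zero.mp h with h' | h'
    · exact absurd h' hcoef
    · exact h'
  · intro h; rw [h, mul_zero]
end

section
/- Let n ≥ 1 and let s, y ∈ ℝⁿ satisfy sᵀy > 0. For γ ∈ (0,1) let α_γ = γ·αBB1 + (1−γ)·αBB2 and let τ̃ = γ·α_γ² / (γ·α_γ² + (1−γ)·αBB2). Then τ̃ ∈ (0,1) and ψ(τ̃, α_γ) = 0; i.e., every convex combination of the two BB stepsizes is a stationary point of the least-squares merit function φ_{τ̃}(α) = ‖τ̃(α⁻¹s − y) + (1−τ̃)(s − αy)‖² for some τ̃ ∈ (0,1). -/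
theorem stmt_4 (n : ℕ) (hn : 1 ≤ n) (s y : Fin n → ℝ)
    (hsy : 0 < ∑ i, s i * y i)
    (aBB1 aBB2 : ℝ)
    (h1 : aBB1 = (∑ i, s i * s i) / (∑ i, s i * y i))
    (h2 : aBB2 = (∑ i, s i * y i) / (∑ i, y i * y i))
    (ψ : ℝ → ℝ → ℝ)
    (hψ : ∀ τ α : ℝ, ψ τ α =
      (1 - τ) * (∑ i, y i * y i) * (α ^ 3 - α ^ 2 * aBB2)
        + τ * (∑ i, s i * y i) * (α - aBB1))
    (γ : ℝ) (hγ : γ ∈ Set.Ioo (0 : ℝ) 1)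
    (a τt : ℝ)
    (ha : a = γ * aBB1 + (1 - γ) * aBB2)
    (hτt : τt = γ * a ^ 2 / (γ * a ^ 2 + (1 - γ) * aBB2)) :
    τt ∈ Set.Ioo (0 : ℝ) 1 ∧ ψ τt a = 0 := by
  obtain ⟨hγ0, hγ1⟩ := hγ
  have hY0 : (0:ℝ) ≤ ∑ i, y i * y i :=
    Finset.sum_nonneg fun i _ => mul_self_nonneg _
  have hY : (0:ℝ) < ∑ i, y i * y i := by
    rcases hY0.lt_or_eq with h | h
    · exact h
    · exfalso
      have hz : ∀ i ∈ Finset.univ, y i * y i = 0 :=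
        (Finset.sum_eq_zero_iff_of_nonneg fun i _ => mul_self_nonneg _).mp h.symm
      have : (∑ i, s i * y i) = 0 := by
        apply Finset.sum_eq_zero
        intro i hi
        have := mul_self_eq_zero.mp (hz i hi)
        simp [this]
      linarith
  have hS0 : (0:ℝ) ≤ ∑ i, s i * s i :=
    Finset.sum_nonneg fun i _ => mul_self_nonneg _
  have hS : (0:ℝ) < ∑ i, s i * s i := by
    rcases hS0.lt_or_eq with h | h
    · exact h
    · exfalso
      have hz : ∀ i ∈ Finset.univ, s i * s i = 0 :=
        (Finset.sum_eq_zero_iff_of_nonneg fun i _ => mul_self_nonneg _).mp h.symm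
      have : (∑ i, s i * y i) = 0 := by
        apply Finset.sum_eq_zero
        intro i hi
        have := mul_self_eq_zero.mp (hz i hi)
        simp [this]
      linarith
  have hBB1 : 0 < aBB1 := by rw [h1]; positivity
  have hBB2 : 0 < aBB2 := by rw [h2]; positivity
  have ha0 : 0 < a := by
    rw [ha]; have : 0 < 1 - γ := by linarith
    positivity
  have hD : 0 < γ * a ^ 2 + (1 - γ) * aBB2 := by
    have : 0 < 1 - γ := by linarith
    positivity
  have key : (∑ i, y i * y i) * aBB2 = ∑ i, s i * y i := by
    rw [h2]; field_simp
    exact div_self (by simpa [pow_two] using hY.ne')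
  constructor
  · constructor
    · rw [hτt]; positivity
    · rw [hτt, div_lt_one hD]
      nlinarith [hBB2]
  · subst ha
    rw [hψ, hτt]
    rw [← key]
    field_simp
    ring
end

section
/- In the two-dimensional setting, for every k ≥ 2 one has q_{k+1} = h_{γ_k}(q_{k−1})² · q_k / q_{k−1}², where h_γ(w) = (γ(λ² + w) + (1−γ)λ(λ + w)) / (γ(λ² + w) + (1−γ)(λ + w)). -/
theorem stmt_7 (lam : ℝ) (hlam : 1 < lam)
    (γ : ℕ → ℝ) (hγ : ∀ k, 2 ≤ k → γ k ∈ Set.Icc (0 : ℝ) 1)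
    (g1 g2 : ℕ → ℝ)
    (hg11 : g1 1 ≠ 0) (hg21 : g2 1 ≠ 0) (hg12 : g1 2 ≠ 0) (hg22 : g2 2 ≠ 0)
    (q : ℕ → ℝ) (hq : ∀ j, q j = (g1 j) ^ 2 / (g2 j) ^ 2)
    (α : ℕ → ℝ)
    (hα : ∀ k, 2 ≤ k → α k =
      γ k * (1 + q (k - 1)) / (lam + q (k - 1)) +
        (1 - γ k) * (lam + q (k - 1)) / (lam ^ 2 + q (k - 1)))
    (hup1 : ∀ k, 2 ≤ k → g1 (k + 1) = (1 - α k) * g1 k)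
    (hup2 : ∀ k, 2 ≤ k → g2 (k + 1) = (1 - lam * α k) * g2 k) :
    ∀ k, 2 ≤ k →
      q (k + 1) =
        ((γ k * (lam ^ 2 + q (k - 1)) + (1 - γ k) * lam * (lam + q (k - 1))) /
            (γ k * (lam ^ 2 + q (k - 1)) + (1 - γ k) * (lam + q (k - 1)))) ^ 2 *
          q k / (q (k - 1)) ^ 2 := by
  have hlam0 : (0:ℝ) < lam := one_pos.trans hlam
  have qpos : ∀ j, g1 j ≠ 0 → g2 j ≠ 0 → 0 < q j := by
    intro j h1 h2
    rw [hq]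
    positivity
  -- key identities and positivity facts
  have keys : ∀ k, 2 ≤ k → 0 < q (k-1) →
      (1 - α k) = (lam - 1) *
          (γ k * (lam^2 + q (k-1)) + (1 - γ k) * lam * (lam + q (k-1))) /
          ((lam + q (k-1)) * (lam^2 + q (k-1))) ∧
      (1 - lam * α k) = q (k-1) * (1 - lam) *
          (γ k * (lam^2 + q (k-1)) + (1 - γ k) * (lam + q (k-1))) /
          ((lam + q (k-1)) * (lam^2 + q (k-1))) ∧
      0 < γ k * (lam^2 + q (k-1)) + (1 - γ k) * lam * (lam + q (k-1)) ∧
      0 < γ k * (lam^2 + q (k-1)) + (1 - γ k) * (lam + q (k-1)) := by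
    intro k hk hw
    obtain ⟨hγ0, hγ1⟩ := hγ k hk
    have hd1 : lam + q (k-1) ≠ 0 := by nlinarith
    have hd2 : lam^2 + q (k-1) ≠ 0 := by nlinarith
    have hN1 : 0 < γ k * (lam^2 + q (k-1)) + (1 - γ k) * lam * (lam + q (k-1)) := by
      nlinarith [mul_nonneg hγ0 hw.le,
        mul_nonneg (mul_nonneg (sub_nonneg.mpr hγ1) hlam0.le) hw.le]
    have hN2 : 0 < γ k * (lam^2 + q (k-1)) + (1 - γ k) * (lam + q (k-1)) := by
      nlinarith [mul_nonneg hγ0 hw.le, mul_nonneg (sub_nonneg.mpr hγ1) hw.le]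
    refine ⟨?_, ?_, hN1, hN2⟩ <;> rw [hα k hk] <;> field_simp <;> ring
  -- nonvanishing of all components
  have nz : ∀ k, 2 ≤ k → g1 k ≠ 0 ∧ g2 k ≠ 0 ∧ g1 (k-1) ≠ 0 ∧ g2 (k-1) ≠ 0 := by
    intro k hk
    induction k, hk using Nat.le_induction with
    | base => exact ⟨hg12, hg22, hg11, hg21⟩
    | succ k hk ih =>
      obtain ⟨h1, h2, h1', h2'⟩ := ih
      have hw : 0 < q (k-1) := qpos _ h1' h2'
      obtain ⟨e1, e2, hN1, hN2⟩ := keys k hk hw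
      have hd1 : lam + q (k-1) ≠ 0 := by nlinarith
      have hd2 : lam^2 + q (k-1) ≠ 0 := by nlinarith
      have ha1 : 1 - α k ≠ 0 := by
        rw [e1]
        exact div_ne_zero (mul_ne_zero (by linarith) hN1.ne') (mul_ne_zero hd1 hd2)
      have ha2 : 1 - lam * α k ≠ 0 := by
        rw [e2]
        exact div_ne_zero (mul_ne_zero (mul_ne_zero hw.ne' (by linarith)) hN2.ne')
          (mul_ne_zero hd1 hd2)
      refine ⟨?_, ?_, ?_, ?_⟩
      · rw [hup1 k hk]; exact mul_ne_zero ha1 h1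
      · rw [hup2 k hk]; exact mul_ne_zero ha2 h2
      · simpa using h1
      · simpa using h2
  intro k hk
  obtain ⟨h1, h2, h1', h2'⟩ := nz k hk
  have hw : 0 < q (k-1) := qpos _ h1' h2'
  obtain ⟨e1, e2, hN1, hN2⟩ := keys k hk hw
  have hd1 : lam + q (k-1) ≠ 0 := by nlinarith
  have hd2 : lam^2 + q (k-1) ≠ 0 := by nlinarith
  have hl1 : (1:ℝ) - lam ≠ 0 := by linarith
  have hl2 : lam - 1 ≠ 0 := by linarith
  rw [hq (k+1), hup1 k hk, hup2 k hk, hq k, e1, e2]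
  field_simp
  ring
end

section
/- Let λ > 1, c₁ = 2 log λ, and θ = (1 + √7 i)/2 ∈ ℂ. Let M : ℕ → ℝ and r : ℕ → ℝ satisfy M_{k+1} = M_k − 2M_{k−1} + 2 r_k and 0 < r_k < log λ for all k ≥ 2, and define ξ_k = M_k + (θ − 1)M_{k−1} ∈ ℂ for k ≥ 2. If |ξ₂| > 8 log λ, then |ξ_k| ≥ (√2 − 1)·2^{k/2}·c₁ for all k ≥ 2. -/
theorem stmt_9 (lam : ℝ) (hlam : 1 < lam)
    (c1 : ℝ) (hc1 : c1 = 2 * Real.log lam)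
    (θ : ℂ) (hθ : θ = (1 + Real.sqrt 7 * Complex.I) / 2)
    (M r : ℕ → ℝ)
    (hM : ∀ k, 2 ≤ k → M (k + 1) = M k - 2 * M (k - 1) + 2 * r k)
    (hr : ∀ k, 2 ≤ k → 0 < r k ∧ r k < Real.log lam)
    (ξ : ℕ → ℂ)
    (hξ : ∀ k, 2 ≤ k → ξ k = (M k : ℂ) + (θ - 1) * (M (k - 1) : ℂ))
    (hξ2 : 8 * Real.log lam < ‖ξ 2‖) :
    ∀ k : ℕ, 2 ≤ k →
      (Real.sqrt 2 - 1) * (2 : ℝ) ^ ((k : ℝ) / 2) * c1 ≤ ‖ξ k‖ := by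
  have hlog : 0 < Real.log lam := Real.log_pos hlam
  have hc1pos : 0 < c1 := by rw [hc1]; linarith
  have hs2 : Real.sqrt 2 ^ 2 = 2 := Real.sq_sqrt (by norm_num)
  have hs2nn : 0 ≤ Real.sqrt 2 := Real.sqrt_nonneg 2
  have hs2lt : Real.sqrt 2 < 1.5 := by nlinarith
  have hs2gt : 1 < Real.sqrt 2 := by nlinarith
  -- θ satisfies θ² - θ + 2 = 0
  have h7 : ((Real.sqrt 7 : ℝ) : ℂ) ^ 2 = 7 := by
    norm_cast
    rw [Real.sq_sqrt] <;> norm_num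
  have hθ2 : θ ^ 2 - θ + 2 = 0 := by
    rw [hθ]
    field_simp
    ring_nf
    rw [Complex.I_sq]
    ring_nf
    linear_combination -h7
  -- |θ| = √2
  have hθabs : ‖θ‖ = Real.sqrt 2 := by
    rw [← Real.sqrt_sq (norm_nonneg θ), Complex.sq_norm]
    congr 1
    rw [hθ, Complex.normSq_apply]
    simp [Complex.div_re, Complex.div_im, Complex.normSq_apply]
    nlinarith [Real.sq_sqrt (by norm_num : (0:ℝ) ≤ 7), Real.sqrt_nonneg 7]
  -- recurrence for ξ
  have hrec : ∀ k, 2 ≤ k → ξ (k + 1) = θ * ξ k + 2 * (r k : ℂ) := by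
    intro k hk
    have h1 := hξ (k + 1) (by omega)
    have h2 := hξ k hk
    have h3 := hM k hk
    simp only [Nat.add_sub_cancel] at h1
    rw [h1, h2, h3]
    push_cast
    linear_combination (-(M (k - 1) : ℂ)) * hθ2
  -- abs inequality step
  have hstep : ∀ k, 2 ≤ k →
      Real.sqrt 2 * ‖ξ k‖ - c1 ≤ ‖ξ (k + 1)‖ := by
    intro k hk
    have h1 : ‖θ * ξ k‖ ≤ ‖ξ (k + 1)‖ + ‖2 * (r k : ℂ)‖ := by
      have := norm_add_le (ξ (k + 1)) (-(2 * (r k : ℂ)))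
      rw [hrec k hk] at this ⊢
      simpa using this
    rw [norm_mul, hθabs] at h1
    have h2 : ‖2 * (r k : ℂ)‖ = 2 * r k := by
      rw [show (2 * (r k : ℂ)) = ((2 * r k : ℝ) : ℂ) by push_cast; ring,
        Complex.norm_real, Real.norm_eq_abs, abs_of_pos (by linarith [(hr k hk).1])]
    have h3 := (hr k hk).2
    rw [h2] at h1
    rw [hc1]
    linarith
  -- strengthened induction
  have main : ∀ k : ℕ, 2 ≤ k →
      (Real.sqrt 2 - 1) * (2 : ℝ) ^ ((k : ℝ) / 2) * c1 + (Real.sqrt 2 + 1) * c1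
        ≤ ‖ξ k‖ := by
    intro k hk
    induction k, hk using Nat.le_induction with
    | base =>
      have h2 : ((2 : ℕ) : ℝ) / 2 = 1 := by norm_num
      rw [h2, Real.rpow_one, hc1]
      nlinarith
    | succ k hk ih =>
      have hpow : (2 : ℝ) ^ (((k + 1 : ℕ) : ℝ) / 2) =
          Real.sqrt 2 * (2 : ℝ) ^ ((k : ℝ) / 2) := by
        rw [Real.sqrt_eq_rpow, ← Real.rpow_add (by norm_num)]
        push_cast
        ring_nf
      have hpowpos : 0 < (2 : ℝ) ^ ((k : ℝ) / 2) := Real.rpow_pos_of_pos (by norm_num) _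
      have h1 := hstep k hk
      rw [hpow]
      nlinarith
  intro k hk
  have := main k hk
  nlinarith [Real.rpow_pos_of_pos (show (0:ℝ) < 2 by norm_num) ((k : ℝ) / 2)]
end

section
/- Let λ > 1, c₁ = 2 log λ, and θ = (1 + √7 i)/2 ∈ ℂ. Let M : ℕ → ℝ and r : ℕ → ℝ satisfy M_{k+1} = M_k − 2M_{k−1} + 2 r_k and 0 < r_k < log λ for all k ≥ 2, and define ξ_k = M_k + (θ − 1)M_{k−1} ∈ ℂ for k ≥ 2. If |ξ₂| > 8 log λ, then for every k ≥ 2, max{|M_k|, |M_{k−1}|} ≥ (√2 − 1)²·2^{k/2}·c₁. -/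
theorem stmt_10 (lam : ℝ) (hlam : 1 < lam)
    (c1 : ℝ) (hc1 : c1 = 2 * Real.log lam)
    (θ : ℂ) (hθ : θ = (1 + Real.sqrt 7 * Complex.I) / 2)
    (M r : ℕ → ℝ)
    (hM : ∀ k, 2 ≤ k → M (k + 1) = M k - 2 * M (k - 1) + 2 * r k)
    (hr : ∀ k, 2 ≤ k → 0 < r k ∧ r k < Real.log lam)
    (ξ : ℕ → ℂ)
    (hξ : ∀ k, 2 ≤ k → ξ k = (M k : ℂ) + (θ - 1) * (M (k - 1) : ℂ))
    (hξ2 : 8 * Real.log lam < ‖ξ 2‖) :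
    ∀ k : ℕ, 2 ≤ k →
      (Real.sqrt 2 - 1) ^ 2 * (2 : ℝ) ^ ((k : ℝ) / 2) * c1 ≤
        max |M k| |M (k - 1)| := by
  have hlog : 0 < Real.log lam := Real.log_pos hlam
  have hc1pos : 0 < c1 := by rw [hc1]; linarith
  have hs2 : Real.sqrt 2 ^ 2 = 2 := Real.sq_sqrt (by norm_num)
  have hs0 : 0 ≤ Real.sqrt 2 := Real.sqrt_nonneg 2
  have hs1 : 1 ≤ Real.sqrt 2 := by nlinarith
  -- algebraic facts about θ
  have hθθ : θ * (θ - 1) = -2 := by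
    have h7 : ((Real.sqrt 7 : ℝ) : ℂ)^2 = 7 := by
      norm_cast; rw [Real.sq_sqrt]; norm_num
    rw [hθ]
    linear_combination (Complex.I^2 / 4) * h7 + (7/4 : ℂ) * Complex.I_sq
  have h7 : Real.sqrt 7 ^ 2 = 7 := Real.sq_sqrt (by norm_num)
  have hre : θ.re = 1/2 := by rw [hθ]; simp
  have him : θ.im = Real.sqrt 7 / 2 := by rw [hθ]; simp
  have habsθ : ‖θ‖ = Real.sqrt 2 := by
    rw [Complex.norm_def, Complex.normSq_apply, hre, him]
    rw [show (1/2 : ℝ) * (1/2) + Real.sqrt 7/2 * (Real.sqrt 7/2) = 2 by nlinarith]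
  have habsθ1 : ‖θ - 1‖ = Real.sqrt 2 := by
    rw [Complex.norm_def, Complex.normSq_apply, Complex.sub_re, Complex.sub_im, hre, him]
    rw [show (1/2 - (1:ℂ).re : ℝ) * (1/2 - (1:ℂ).re)
        + (Real.sqrt 7/2 - (1:ℂ).im) * (Real.sqrt 7/2 - (1:ℂ).im) = 2 by simp; nlinarith]
  -- recurrence for ξ
  have hrec : ∀ k, 2 ≤ k → ξ (k + 1) = θ * ξ k + 2 * (r k : ℂ) := by
    intro k hk
    have h1 := hξ k hk
    have h2 := hξ (k + 1) (by omega)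
    have h3 := hM k hk
    have hk1 : k + 1 - 1 = k := by omega
    rw [hk1] at h2
    rw [h2, h1, h3]
    push_cast
    linear_combination (-(M (k-1) : ℂ)) * hθθ
  -- main invariant
  have key : ∀ k : ℕ, 2 ≤ k →
      (2:ℝ) ^ (((k:ℝ) - 2)/2) * c1 + (Real.sqrt 2 + 1) * c1 ≤ ‖ξ k‖ := by
    intro k hk
    induction k, hk using Nat.le_induction with
    | base =>
      have : ((2:ℕ):ℝ) = 2 := by norm_num
      rw [this]
      norm_num
      have hs32 : Real.sqrt 2 ≤ 3/2 := by nlinarith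
      have := mul_le_mul_of_nonneg_right hs32 hc1pos.le
      linarith [hξ2]
    | succ k hk ih =>
      have hrk := hr k hk
      have h1 := hrec k hk
      have habs : Real.sqrt 2 * ‖ξ k‖ - 2 * r k ≤ ‖ξ (k+1)‖ := by
        have : ‖θ * ξ k‖ ≤ ‖ξ (k+1)‖ + ‖2 * (r k : ℂ)‖ := by
          calc ‖θ * ξ k‖
              = ‖ξ (k+1) - 2 * (r k : ℂ)‖ := by rw [h1]; ring_nf
            _ ≤ _ := norm_sub_le _ _
        rw [norm_mul, habsθ] at this
        have h2r : ‖2 * (r k : ℂ)‖ = 2 * r k := by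
          rw [norm_mul, Complex.norm_real, Complex.norm_two, Real.norm_eq_abs, abs_of_pos hrk.1]
        rw [h2r] at this
        linarith
      have hpow : (2:ℝ) ^ (((k:ℝ) + 1 - 2)/2) = Real.sqrt 2 * (2:ℝ) ^ (((k:ℝ) - 2)/2) := by
        rw [Real.sqrt_eq_rpow, ← Real.rpow_add (by norm_num)]
        congr 1
        ring
      push_cast
      rw [hpow]
      have h4 : Real.sqrt 2 * ((2:ℝ)^(((k:ℝ)-2)/2)*c1 + (Real.sqrt 2 + 1)*c1)
          = Real.sqrt 2 * (2:ℝ)^(((k:ℝ)-2)/2)*c1 + (2 + Real.sqrt 2)*c1 := by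
        linear_combination c1 * hs2
      have h5 := mul_le_mul_of_nonneg_left ih hs0
      rw [h4] at h5
      have hr2 : 2 * r k < c1 := by rw [hc1]; linarith [hrk.2]
      linarith [habs, h5, hr2]
  -- conclude
  intro k hk
  have hkey := key k hk
  have hξk := hξ k hk
  have hub : ‖ξ k‖ ≤ |M k| + Real.sqrt 2 * |M (k-1)| := by
    calc ‖ξ k‖ ≤ ‖(M k : ℂ)‖ + ‖(θ - 1) * (M (k-1) : ℂ)‖ := by
          rw [hξk]; exact norm_add_le _ _
      _ = |M k| + Real.sqrt 2 * |M (k-1)| := by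
          simp only [norm_mul, habsθ1, Complex.norm_real, Real.norm_eq_abs]
  set m := max |M k| |M (k-1)| with hm
  have h1 : |M k| ≤ m := le_max_left _ _
  have h2 : |M (k-1)| ≤ m := le_max_right _ _
  have hpow2 : (2:ℝ) ^ ((k:ℝ)/2) = 2 * (2:ℝ) ^ (((k:ℝ) - 2)/2) := by
    rw [show ((k:ℝ))/2 = ((k:ℝ) - 2)/2 + 1 by ring, Real.rpow_add (by norm_num)]
    ring
  have hpow0 : (0:ℝ) < (2:ℝ) ^ (((k:ℝ) - 2)/2) := Real.rpow_pos_of_pos (by norm_num) _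
  -- (1+√2) m ≥ |ξ k| ≥ 2^{(k-2)/2} c1 + (√2+1) c1
  have hmbig : (2:ℝ) ^ (((k:ℝ) - 2)/2) * c1 ≤ (1 + Real.sqrt 2) * m := by
    have hsc : (0:ℝ) ≤ (Real.sqrt 2 + 1) * c1 := mul_nonneg (by linarith) hc1pos.le
    linarith [hkey, hub, h1, mul_le_mul_of_nonneg_left h2 hs0, hsc]
  have hq : (0:ℝ) < (2:ℝ) ^ (((k:ℝ) - 2)/2) * c1 := mul_pos hpow0 hc1pos
  have hm0 : (0:ℝ) ≤ m := le_trans (abs_nonneg (M k)) h1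
  have step := mul_le_mul_of_nonneg_left hmbig (sub_nonneg.2 hs1)
  have heq : (Real.sqrt 2 - 1) * ((1 + Real.sqrt 2) * m) = m := by
    linear_combination m * hs2
  rw [heq] at step
  have h75 : 7/5 ≤ Real.sqrt 2 := by nlinarith
  have hsq : (Real.sqrt 2 - 1)^2 = 3 - 2*Real.sqrt 2 := by linear_combination hs2
  rw [hpow2, hsq]
  have key2 : (0:ℝ) ≤ (5*Real.sqrt 2 - 7) * ((2:ℝ)^(((k:ℝ)-2)/2) * c1) :=
    mul_nonneg (by linarith) hq.le
  nlinarith [step, key2]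
end

section
/- Let λ > 1, c₁ = 2 log λ, and θ = (1 + √7 i)/2 ∈ ℂ. Let M : ℕ → ℝ and r : ℕ → ℝ satisfy M_{k+1} = M_k − 2M_{k−1} + 2 r_k and 0 < r_k < log λ for all k ≥ 2, and define ξ_k = M_k + (θ − 1)M_{k−1} ∈ ℂ for k ≥ 2. If |ξ₂| > 8 log λ, then for every k ≥ 2: (i) max_{−1 ≤ i ≤ 3} M_{k+i} ≥ (√2 − 1)²·2^{k/2}·c₁ − 2c₁, and (ii) min_{−1 ≤ i ≤ 3} M_{k+i} ≤ −(√2 − 1)²·2^{k/2}·c₁ + 2c₁. -/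
private lemma geom_aux_stmt11 (a b m : ℝ) (h1 : a ≤ m) (h2 : b ≤ m) (h3 : b - 2*a ≤ m)
    (h4 : -b - 2*a ≤ m) (h5 : -3*b + 2*a ≤ m) :
    (b - a/2)^2 + 7/4 * a^2 ≤ (2*m)^2 := by
  nlinarith [mul_nonneg (sub_nonneg.2 h1) (sub_nonneg.2 h2),
    mul_nonneg (sub_nonneg.2 h3) (sub_nonneg.2 h4),
    mul_nonneg (sub_nonneg.2 h4) (sub_nonneg.2 h5),
    mul_nonneg (sub_nonneg.2 h1) (sub_nonneg.2 h5),
    mul_nonneg (sub_nonneg.2 h2) (sub_nonneg.2 h3),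
    mul_nonneg (sub_nonneg.2 h2) (sub_nonneg.2 h5),
    mul_nonneg (sub_nonneg.2 h1) (sub_nonneg.2 h4),
    sq_nonneg (m-a), sq_nonneg (m-b), sq_nonneg a, sq_nonneg b]

set_option maxHeartbeats 1000000 in
theorem stmt_11 (lam : ℝ) (hlam : 1 < lam)
    (c1 : ℝ) (hc1 : c1 = 2 * Real.log lam)
    (θ : ℂ) (hθ : θ = (1 + Real.sqrt 7 * Complex.I) / 2)
    (M r : ℕ → ℝ)
    (hM : ∀ k, 2 ≤ k → M (k + 1) = M k - 2 * M (k - 1) + 2 * r k)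
    (hr : ∀ k, 2 ≤ k → 0 < r k ∧ r k < Real.log lam)
    (ξ : ℕ → ℂ)
    (hξ : ∀ k, 2 ≤ k → ξ k = (M k : ℂ) + (θ - 1) * (M (k - 1) : ℂ))
    (hξ2 : 8 * Real.log lam < ‖ξ 2‖) :
    ∀ k : ℕ, 2 ≤ k →
      (∃ j ∈ Finset.Icc (k - 1) (k + 3),
        (Real.sqrt 2 - 1) ^ 2 * (2 : ℝ) ^ ((k : ℝ) / 2) * c1 - 2 * c1 ≤ M j) ∧
      (∃ j ∈ Finset.Icc (k - 1) (k + 3),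
        M j ≤ -((Real.sqrt 2 - 1) ^ 2 * (2 : ℝ) ^ ((k : ℝ) / 2) * c1) + 2 * c1) := by
  have hc1pos : 0 < c1 := by
    rw [hc1]; have := Real.log_pos hlam; linarith
  have s2 : Real.sqrt 2 ^ 2 = 2 := Real.sq_sqrt (by norm_num)
  have s2lb : 1.375 ≤ Real.sqrt 2 := by nlinarith [Real.sqrt_nonneg 2]
  have s2ub : Real.sqrt 2 ≤ 1.5 := by nlinarith [Real.sqrt_nonneg 2]
  have h7 : Real.sqrt 7 * Real.sqrt 7 = 7 := Real.mul_self_sqrt (by norm_num)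
  -- θ satisfies θ² - θ + 2 = 0
  have hθeq : θ^2 - θ + 2 = 0 := by
    have h7c : (Real.sqrt 7 : ℂ) * (Real.sqrt 7 : ℂ) = 7 := by
      exact_mod_cast h7
    rw [hθ]
    linear_combination (7/4) * Complex.I_sq + (Complex.I ^ 2 / 4) * h7c
  -- |θ| = √2
  have habsθ : ‖θ‖ = Real.sqrt 2 := by
    have hsq : (‖θ‖)^2 = 2 := by
      rw [Complex.sq_norm, hθ, Complex.normSq_apply]
      simp [Complex.add_re, Complex.add_im, Complex.mul_re, Complex.mul_im, Complex.div_re,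
        Complex.div_im, Complex.normSq_apply]
      nlinarith [h7]
    rw [← hsq, Real.sqrt_sq (norm_nonneg _)]
  -- |ξ k|² formula
  have habs2 : ∀ k : ℕ, 2 ≤ k →
      (‖ξ k‖)^2 = (M k - M (k-1)/2)^2 + 7/4 * (M (k-1))^2 := by
    intro k hk
    rw [hξ k hk, Complex.sq_norm, hθ, Complex.normSq_apply]
    simp [Complex.add_re, Complex.add_im, Complex.mul_re, Complex.mul_im, Complex.div_re,
      Complex.div_im, Complex.normSq_apply]
    nlinarith [h7]
  -- recurrence for ξ
  have hxi_rec : ∀ k, 2 ≤ k → ξ (k+1) = θ * ξ k + 2 * (r k : ℂ) := by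
    intro k hk
    rw [hξ (k+1) (by omega), hξ k hk]
    have hMc : (M (k+1) : ℂ) = (M k : ℂ) - 2*(M (k-1):ℂ) + 2*(r k : ℂ) := by
      exact_mod_cast hM k hk
    simp only [Nat.add_sub_cancel]
    linear_combination hMc - (M (k-1) : ℂ) * hθeq
  -- one-step growth of |ξ|
  have hRstep : ∀ k, 2 ≤ k → Real.sqrt 2 * ‖ξ k‖ - c1 ≤ ‖ξ (k+1)‖ := by
    intro k hk
    have hrk := hr k hk
    have htri : ‖θ * ξ k‖ ≤ ‖ξ (k+1)‖ + ‖2 * (r k : ℂ)‖ := by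
      have : θ * ξ k = ξ (k+1) - 2 * (r k : ℂ) := by rw [hxi_rec k hk]; ring
      rw [this]
      exact norm_sub_le _ _
    rw [norm_mul, habsθ] at htri
    have habsr : ‖2 * (r k : ℂ)‖ = 2 * r k := by
      rw [norm_mul]
      simp [abs_of_pos hrk.1]
    rw [habsr] at htri
    have : r k < Real.log lam := hrk.2
    linarith [htri]
  -- exponential growth of |ξ|
  have hgrow : ∀ k : ℕ, 2 ≤ k →
      (1/2) * (2:ℝ)^((k:ℝ)/2) * c1 + (Real.sqrt 2 + 1) * c1 ≤ ‖ξ k‖ := by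
    intro k hk
    induction k, hk using Nat.le_induction with
    | base =>
      have h2 : (2:ℝ)^(((2:ℕ):ℝ)/2) = 2 := by
        rw [show ((2:ℕ):ℝ)/2 = 1 by norm_num, Real.rpow_one]
      rw [h2, hc1]
      nlinarith [Real.log_pos hlam]
    | succ n hn ih =>
      have hstep := hRstep n hn
      have hX : (2:ℝ)^(((n:ℝ)+1)/2) = Real.sqrt 2 * (2:ℝ)^((n:ℝ)/2) := by
        rw [Real.sqrt_eq_rpow, ← Real.rpow_add (by norm_num : (0:ℝ) < 2)]
        congr 1; ring
      push_cast
      rw [hX]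
      have hXpos : (0:ℝ) ≤ (2:ℝ)^((n:ℝ)/2) := Real.rpow_nonneg (by norm_num) _
      nlinarith [ih, hstep]
  -- main argument
  intro k hk
  set X : ℝ := (2:ℝ)^((k:ℝ)/2) with hXdef
  have hXpos : (0:ℝ) ≤ X := Real.rpow_nonneg (by norm_num) _
  have hrk := hr k hk
  have hrk1 := hr (k+1) (by omega)
  have hrk2 := hr (k+2) (by omega)
  have e1 : M (k+1) = M k - 2 * M (k-1) + 2 * r k := hM k hk
  have e2 : M (k+2) = M (k+1) - 2 * M k + 2 * r (k+1) := by
    have := hM (k+1) (by omega)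
    simpa using this
  have e3 : M (k+3) = M (k+2) - 2 * M (k+1) + 2 * r (k+2) := by
    have := hM (k+2) (by omega)
    simpa using this
  have hR2 := habs2 k hk
  have hRlow := hgrow k hk
  have hRnn : (0:ℝ) ≤ ‖ξ k‖ := norm_nonneg _
  have mem1 : k - 1 ∈ Finset.Icc (k-1) (k+3) := Finset.mem_Icc.2 (by omega)
  have mem2 : k ∈ Finset.Icc (k-1) (k+3) := Finset.mem_Icc.2 (by omega)
  have mem3 : k + 1 ∈ Finset.Icc (k-1) (k+3) := Finset.mem_Icc.2 (by omega)
  have mem4 : k + 2 ∈ Finset.Icc (k-1) (k+3) := Finset.mem_Icc.2 (by omega)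
  have mem5 : k + 3 ∈ Finset.Icc (k-1) (k+3) := Finset.mem_Icc.2 (by omega)
  constructor
  · by_contra hcon
    push_neg at hcon
    set T : ℝ := (Real.sqrt 2 - 1) ^ 2 * X * c1 - 2 * c1 with hT
    have b1 := hcon _ mem1
    have b2 := hcon _ mem2
    have b3 := hcon _ mem3
    have b4 := hcon _ mem4
    have b5 := hcon _ mem5
    set m : ℝ := T + 2 * c1 with hm
    have g := geom_aux_stmt11 (M (k-1)) (M k) m (by linarith) (by linarith)
      (by linarith) (by linarith) (by linarith)
    rw [← hR2] at g
    have hmeq : m = (Real.sqrt 2 - 1)^2 * X * c1 := by rw [hm, hT]; ring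
    have hmnn : 0 ≤ m := by rw [hmeq]; positivity
    have hRle : ‖ξ k‖ ≤ 2 * m :=
      (pow_le_pow_iff_left₀ hRnn (by linarith) (by norm_num)).1 g
    have key : 2 * m ≤ (1/2) * X * c1 := by
      rw [hmeq]
      nlinarith [mul_nonneg hXpos hc1pos.le]
    have hpos : 0 < (Real.sqrt 2 + 1) * c1 := by positivity
    linarith
  · by_contra hcon
    push_neg at hcon
    have b1 := hcon _ mem1
    have b2 := hcon _ mem2
    have b3 := hcon _ mem3
    have b4 := hcon _ mem4
    have b5 := hcon _ mem5
    set m : ℝ := (Real.sqrt 2 - 1) ^ 2 * X * c1 with hm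
    have g := geom_aux_stmt11 (-(M (k-1))) (-(M k)) m (by linarith) (by linarith)
      (by linarith) (by linarith) (by linarith)
    have hring : ((-(M k)) - (-(M (k-1)))/2)^2 + 7/4 * (-(M (k-1)))^2
        = (M k - M (k-1)/2)^2 + 7/4*(M (k-1))^2 := by ring
    have g' : (‖ξ k‖)^2 ≤ (2*m)^2 := by rw [hR2]; linarith [g, hring]
    have hmnn : 0 ≤ m := by rw [hm]; positivity
    have hRle : ‖ξ k‖ ≤ 2 * m :=
      (pow_le_pow_iff_left₀ hRnn (by linarith) (by norm_num)).1 g'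
    have key : 2 * m ≤ (1/2) * X * c1 := by
      rw [hm]
      nlinarith [mul_nonneg hXpos hc1pos.le]
    have hpos : 0 < (Real.sqrt 2 + 1) * c1 := by positivity
    linarith
end

section
/- In the two-dimensional setting, for every k ≥ 2 one has |g_{k+1}⁽²⁾| ≤ (λ − 1)·q_{k−1}·|g_k⁽²⁾|. -/
lemma alpha_aux (lam q γ : ℝ) (hlam : 1 < lam) (hq : 0 < q)
    (hγ0 : 0 ≤ γ) (hγ1 : γ ≤ 1) :
    1 < lam * (γ * (1 + q) / (lam + q) + (1 - γ) * (lam + q) / (lam ^ 2 + q)) ∧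
    lam * (γ * (1 + q) / (lam + q) + (1 - γ) * (lam + q) / (lam ^ 2 + q)) - 1 ≤ (lam - 1) * q ∧
    γ * (1 + q) / (lam + q) + (1 - γ) * (lam + q) / (lam ^ 2 + q) < 1 := by
  have h1 : 0 < lam + q := by nlinarith
  have h2 : 0 < lam ^ 2 + q := by nlinarith
  set A : ℝ := (1 + q) / (lam + q) with hA
  set B : ℝ := (lam + q) / (lam ^ 2 + q) with hB
  have eA : γ * (1 + q) / (lam + q) = γ * A := by rw [hA, mul_div_assoc]
  have eB : (1 - γ) * (lam + q) / (lam ^ 2 + q) = (1 - γ) * B := by rw [hB, mul_div_assoc]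
  rw [eA, eB]
  have hA1 : A < 1 := by rw [hA, div_lt_one h1]; linarith
  have hB1 : B < 1 := by rw [hB, div_lt_one h2]; nlinarith
  have hA0 : 0 < A := by positivity
  have hB0 : 0 < B := by positivity
  have hlA : 1 < lam * A := by
    rw [hA, mul_div_assoc', lt_div_iff₀ h1]; nlinarith
  have hlB : 1 < lam * B := by
    rw [hB, mul_div_assoc', lt_div_iff₀ h2]; nlinarith
  have hAq : lam * A - 1 ≤ (lam - 1) * q := by
    rw [hA, mul_div_assoc', sub_le_iff_le_add, div_le_iff₀ h1]
    nlinarith [mul_nonneg hq.le (sq_nonneg (lam - 1)),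
      mul_nonneg (sub_pos.mpr hlam).le (mul_nonneg hq.le hq.le)]
  have hBq : lam * B - 1 ≤ (lam - 1) * q := by
    rw [hB, mul_div_assoc', sub_le_iff_le_add, div_le_iff₀ h2]
    nlinarith [mul_nonneg (mul_nonneg (sub_pos.mpr hlam).le hq.le)
        (by nlinarith : (0:ℝ) ≤ lam ^ 2 - 1),
      mul_nonneg (sub_pos.mpr hlam).le (mul_nonneg hq.le hq.le)]
  refine ⟨?_, ?_, ?_⟩
  · rcases hγ1.lt_or_eq with h | h
    · nlinarith [mul_le_mul_of_nonneg_left hlA.le hγ0,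
        mul_lt_mul_of_pos_left hlB (by linarith : (0:ℝ) < 1 - γ)]
    · subst h; nlinarith
  · nlinarith [mul_le_mul_of_nonneg_left hAq hγ0,
      mul_le_mul_of_nonneg_left hBq (by linarith : (0:ℝ) ≤ 1 - γ)]
  · rcases hγ1.lt_or_eq with h | h
    · nlinarith [mul_le_mul_of_nonneg_left hA1.le hγ0,
        mul_lt_mul_of_pos_left hB1 (by linarith : (0:ℝ) < 1 - γ)]
    · subst h; nlinarith

theorem stmt_12 (lam : ℝ) (hlam : 1 < lam)
    (γ : ℕ → ℝ) (hγ : ∀ k, 2 ≤ k → γ k ∈ Set.Icc (0 : ℝ) 1)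
    (g1 g2 : ℕ → ℝ)
    (hg11 : g1 1 ≠ 0) (hg21 : g2 1 ≠ 0) (hg12 : g1 2 ≠ 0) (hg22 : g2 2 ≠ 0)
    (q : ℕ → ℝ) (hq : ∀ j, q j = (g1 j) ^ 2 / (g2 j) ^ 2)
    (α : ℕ → ℝ)
    (hα : ∀ k, 2 ≤ k → α k =
      γ k * (1 + q (k - 1)) / (lam + q (k - 1)) +
        (1 - γ k) * (lam + q (k - 1)) / (lam ^ 2 + q (k - 1)))
    (hup1 : ∀ k, 2 ≤ k → g1 (k + 1) = (1 - α k) * g1 k)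
    (hup2 : ∀ k, 2 ≤ k → g2 (k + 1) = (1 - lam * α k) * g2 k) :
    ∀ k, 2 ≤ k → |g2 (k + 1)| ≤ (lam - 1) * q (k - 1) * |g2 k| := by
  have key : ∀ k, 2 ≤ k → (g1 k ≠ 0 ∧ g2 k ≠ 0 ∧ g1 (k - 1) ≠ 0 ∧ g2 (k - 1) ≠ 0) := by
    intro k hk
    induction k, hk using Nat.le_induction with
    | base => exact ⟨hg12, hg22, hg11, hg21⟩
    | succ n hn ih =>
      obtain ⟨h1, h2, h3, h4⟩ := ih
      have hqpos : 0 < q (n - 1) := by rw [hq]; positivity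
      obtain ⟨ha1, ha2, ha3⟩ := alpha_aux lam (q (n - 1)) (γ n) hlam hqpos
        (hγ n hn).1 (hγ n hn).2
      rw [← hα n hn] at ha1 ha2 ha3
      have hs : n + 1 - 1 = n := by omega
      rw [hs]
      refine ⟨?_, ?_, h1, h2⟩
      · rw [hup1 n hn]
        exact mul_ne_zero (by linarith) h1
      · rw [hup2 n hn]
        exact mul_ne_zero (by linarith) h2
  intro k hk
  obtain ⟨h1, h2, h3, h4⟩ := key k hk
  have hqpos : 0 < q (k - 1) := by rw [hq]; positivity
  obtain ⟨ha1, ha2, ha3⟩ := alpha_aux lam (q (k - 1)) (γ k) hlam hqpos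
    (hγ k hk).1 (hγ k hk).2
  rw [← hα k hk] at ha1 ha2 ha3
  rw [hup2 k hk, abs_mul]
  have habs : |1 - lam * α k| = lam * α k - 1 := by
    rw [abs_sub_comm]; exact abs_of_nonneg (by linarith)
  rw [habs]
  nlinarith [abs_nonneg (g2 k)]
end

section
/- In the two-dimensional setting, for every k ≥ 2 one has |g_{k+1}⁽¹⁾| ≤ λ·(λ − 1)·(1/q_{k−1})·|g_k⁽¹⁾|. -/
lemma alpha_bounds_aux (lam q g : ℝ) (hlam : 1 < lam) (hq : 0 < q)
    (hg0 : 0 ≤ g) (hg1 : g ≤ 1) :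
    1/lam < g * (1 + q) / (lam + q) + (1 - g) * (lam + q) / (lam ^ 2 + q) ∧
    g * (1 + q) / (lam + q) + (1 - g) * (lam + q) / (lam ^ 2 + q) < 1 ∧
    1 - (g * (1 + q) / (lam + q) + (1 - g) * (lam + q) / (lam ^ 2 + q)) ≤
      lam * (lam - 1) / q := by
  have h1 : 0 < lam + q := by nlinarith
  have h2 : 0 < lam ^ 2 + q := by nlinarith
  have hl : 0 < lam := by linarith
  set a : ℝ := (1 + q) / (lam + q) with ha
  set b : ℝ := (lam + q) / (lam ^ 2 + q) with hb
  have ha1 : 1/lam < a := by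
    rw [ha, div_lt_div_iff₀ hl h1]; nlinarith
  have ha2 : a < 1 := by
    rw [ha, div_lt_one h1]; linarith
  have hb1 : 1/lam < b := by
    rw [hb, div_lt_div_iff₀ hl h2]; nlinarith
  have hb2 : b < 1 := by
    rw [hb, div_lt_one h2]; nlinarith
  have hl1 : 0 < lam - 1 := by linarith
  have ha3 : 1 - a ≤ lam * (lam - 1) / q := by
    have h : 1 - a = (lam - 1) / (lam + q) := by
      rw [ha]; field_simp; ring
    rw [h, div_le_div_iff₀ h1 hq]
    nlinarith [mul_pos hl1 (mul_pos hl hl), mul_pos hl1 (mul_pos hl1 hq)]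
  have hb3 : 1 - b ≤ lam * (lam - 1) / q := by
    have h : 1 - b = (lam ^ 2 - lam) / (lam ^ 2 + q) := by
      rw [hb]; field_simp; ring
    rw [h, div_le_div_iff₀ h2 hq]
    nlinarith [mul_pos (mul_pos hl (mul_pos hl hl)) hl1]
  have e1 : g * (1 + q) / (lam + q) = g * a := by rw [ha]; ring
  have e2 : (1 - g) * (lam + q) / (lam ^ 2 + q) = (1 - g) * b := by rw [hb]; ring
  rw [e1, e2]
  set t : ℝ := lam * (lam - 1) / q with ht
  clear_value a b t
  clear ha hb ht h1 h2
  refine ⟨?_, ?_, ?_⟩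
  · rcases le_total a b with h | h
    · nlinarith [mul_nonneg hg0 (sub_nonneg.mpr h)]
    · nlinarith [mul_nonneg (sub_nonneg.mpr hg1) (sub_nonneg.mpr h)]
  · rcases le_total a b with h | h
    · nlinarith [mul_nonneg (sub_nonneg.mpr hg1) (sub_nonneg.mpr h)]
    · nlinarith [mul_nonneg hg0 (sub_nonneg.mpr h)]
  · nlinarith [mul_nonneg hg0 (sub_nonneg.mpr ha3),
      mul_nonneg (sub_nonneg.mpr hg1) (sub_nonneg.mpr hb3)]

theorem stmt_13 (lam : ℝ) (hlam : 1 < lam)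
    (γ : ℕ → ℝ) (hγ : ∀ k, 2 ≤ k → γ k ∈ Set.Icc (0 : ℝ) 1)
    (g1 g2 : ℕ → ℝ)
    (hg11 : g1 1 ≠ 0) (hg21 : g2 1 ≠ 0) (hg12 : g1 2 ≠ 0) (hg22 : g2 2 ≠ 0)
    (q : ℕ → ℝ) (hq : ∀ j, q j = (g1 j) ^ 2 / (g2 j) ^ 2)
    (α : ℕ → ℝ)
    (hα : ∀ k, 2 ≤ k → α k =
      γ k * (1 + q (k - 1)) / (lam + q (k - 1)) +
        (1 - γ k) * (lam + q (k - 1)) / (lam ^ 2 + q (k - 1)))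
    (hup1 : ∀ k, 2 ≤ k → g1 (k + 1) = (1 - α k) * g1 k)
    (hup2 : ∀ k, 2 ≤ k → g2 (k + 1) = (1 - lam * α k) * g2 k) :
    ∀ k, 2 ≤ k → |g1 (k + 1)| ≤ lam * (lam - 1) * (1 / q (k - 1)) * |g1 k| := by
  have hl0 : (0:ℝ) < lam := by linarith
  -- q j > 0 whenever g1 j, g2 j nonzero
  have hqpos : ∀ j, g1 j ≠ 0 → g2 j ≠ 0 → 0 < q j := by
    intro j h1 h2
    rw [hq j]
    positivity
  have key : ∀ j, 1 ≤ j → (g1 j ≠ 0 ∧ g2 j ≠ 0) ∧ (g1 (j+1) ≠ 0 ∧ g2 (j+1) ≠ 0) := by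
    intro j hj
    induction j, hj using Nat.le_induction with
    | base => exact ⟨⟨hg11, hg21⟩, hg12, hg22⟩
    | succ n hn ih =>
      refine ⟨ih.2, ?_, ?_⟩
      all_goals {
        have hq0 : 0 < q n := hqpos n ih.1.1 ih.1.2
        have hn2 : 2 ≤ n + 1 := by omega
        have hα' := hα (n+1) hn2
        simp only [Nat.add_sub_cancel] at hα'
        obtain ⟨hγ0, hγ1⟩ := hγ (n+1) hn2
        obtain ⟨hA, hB, _⟩ := alpha_bounds_aux lam (q n) (γ (n+1)) hlam hq0 hγ0 hγ1
        rw [← hα'] at hA hB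
        first
        | (rw [hup1 (n+1) hn2]
           exact mul_ne_zero (by linarith) ih.2.1)
        | (rw [hup2 (n+1) hn2]
           have : 1 < lam * α (n+1) := by
             rw [div_lt_iff₀ hl0] at hA; linarith [mul_comm lam (α (n+1))]
           exact mul_ne_zero (by linarith) ih.2.2) }
  intro k hk
  have hk1 : 1 ≤ k - 1 := by omega
  obtain ⟨⟨h1, h2⟩, _⟩ := key (k-1) hk1
  have hq0 : 0 < q (k-1) := hqpos (k-1) h1 h2
  obtain ⟨hγ0, hγ1⟩ := hγ k hk
  obtain ⟨hA, hB, hC⟩ := alpha_bounds_aux lam (q (k-1)) (γ k) hlam hq0 hγ0 hγ1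
  rw [← hα k hk] at hA hB hC
  rw [hup1 k hk, abs_mul]
  have h1ge : 0 ≤ 1 - α k := by linarith
  have : |1 - α k| = 1 - α k := abs_of_nonneg h1ge
  rw [this]
  have htar : lam * (lam - 1) / q (k-1) = lam * (lam - 1) * (1 / q (k-1)) := by ring
  rw [htar] at hC
  exact mul_le_mul_of_nonneg_right hC (abs_nonneg _)
end

section
/- In the two-dimensional setting with γ_k ∈ (0,1) for all k ≥ 2, set c₁ = 2 log λ, M_k = log q_k, θ = (1 + √7 i)/2 ∈ ℂ, and ξ₂ = M₂ + (θ − 1)M₁. If |ξ₂| > 8 log λ, then for every k ≥ 2, ‖g_{k+5}‖ ≤ λ(λ − 1)⁵·exp(−(√2 − 1)²·2^{k/2}·c₁ + 2c₁)·‖g_k‖, where ‖g_j‖ = √((g_j⁽¹⁾)² + (g_j⁽²⁾)²). -/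
set_option maxHeartbeats 4000000

lemma aux_core (lam g q a : ℝ) (hlam : 1 < lam) (hg0 : 0 < g) (hg1 : g < 1) (hq : 0 < q)
    (ha : a = g * (1 + q) / (lam + q) + (1 - g) * (lam + q) / (lam ^ 2 + q)) :
    0 < 1 - a ∧ 1 - a ≤ (lam - 1) * (lam / (lam + q)) ∧
    0 < lam * a - 1 ∧ lam * a - 1 ≤ (lam - 1) * (q / (lam + q)) ∧
    lam * a - 1 ≤ q * (1 - a) ∧ q * (1 - a) ≤ lam * (lam * a - 1) := by
  have hd1 : 0 < lam + q := by linarith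
  have hd2 : 0 < lam ^ 2 + q := by nlinarith
  have hl1 : 0 < lam - 1 := sub_pos.2 hlam
  have hl0 : (0:ℝ) < lam := by linarith
  have hg1' : 0 < 1 - g := sub_pos.2 hg1
  have hdd : 0 < (lam + q) * (lam ^ 2 + q) := mul_pos hd1 hd2
  have h1 : 1 - a = (g * (lam - 1) * (lam ^ 2 + q) + (1 - g) * (lam * (lam - 1)) * (lam + q)) /
      ((lam + q) * (lam ^ 2 + q)) := by
    rw [ha]; field_simp; ring
  have h2 : lam * a - 1 = (q * (lam - 1) * (g * (lam ^ 2 + q) + (1 - g) * (lam + q))) /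
      ((lam + q) * (lam ^ 2 + q)) := by
    rw [ha]; field_simp; ring
  refine ⟨?_, ?_, ?_, ?_, ?_, ?_⟩
  · rw [h1]
    apply div_pos _ hdd
    have t1 := mul_pos (mul_pos hg0 hl1) hd2
    have t2 := mul_pos (mul_pos hg1' (mul_pos hl0 hl1)) hd1
    linarith
  · have e : (lam - 1) * (lam / (lam + q)) - (1 - a) =
        ((lam + q) * ((lam - 1) * (lam - 1)) * (lam ^ 2 + g * q)) / ((lam + q) * ((lam + q) * (lam ^ 2 + q))) := by
      rw [ha]; field_simp; ring
    have hnum : 0 ≤ (lam + q) * ((lam - 1) * (lam - 1)) * (lam ^ 2 + g * q) := by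
      apply mul_nonneg (mul_nonneg hd1.le (mul_nonneg hl1.le hl1.le))
      nlinarith [mul_pos hg0 hq]
    have := div_nonneg hnum (le_of_lt (mul_pos hd1 hdd))
    linarith [e ▸ this]
  · rw [h2]
    apply div_pos _ hdd
    have t1 := mul_pos (mul_pos hq hl1) (add_pos (mul_pos hg0 hd2) (mul_pos hg1' hd1))
    linarith
  · have e : (lam - 1) * (q / (lam + q)) - (lam * a - 1) =
        (q * ((lam - 1) * (lam - 1)) * ((1 - g) * lam) * (lam + q)) / ((lam + q) * ((lam + q) * (lam ^ 2 + q))) := by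
      rw [ha]; field_simp; ring
    have hnum : 0 ≤ q * ((lam - 1) * (lam - 1)) * ((1 - g) * lam) * (lam + q) := by
      apply mul_nonneg (mul_nonneg (mul_nonneg hq.le (mul_nonneg hl1.le hl1.le)) (mul_nonneg hg1'.le hl0.le)) hd1.le
    have := div_nonneg hnum (le_of_lt (mul_pos hd1 hdd))
    linarith [e ▸ this]
  · have e : q * (1 - a) - (lam * a - 1) =
        (q * ((lam - 1) * (lam - 1)) * (1 - g) * (lam + q)) / ((lam + q) * (lam ^ 2 + q)) := by
      rw [ha]; field_simp; ring
    have hnum : 0 ≤ q * ((lam - 1) * (lam - 1)) * (1 - g) * (lam + q) :=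
      mul_nonneg (mul_nonneg (mul_nonneg hq.le (mul_nonneg hl1.le hl1.le)) hg1'.le) hd1.le
    have := div_nonneg hnum hdd.le
    linarith [e ▸ this]
  · have e : lam * (lam * a - 1) - q * (1 - a) =
        (q * ((lam - 1) * (lam - 1)) * g * (lam ^ 2 + q)) / ((lam + q) * (lam ^ 2 + q)) := by
      rw [ha]; field_simp; ring
    have hnum : 0 ≤ q * ((lam - 1) * (lam - 1)) * g * (lam ^ 2 + q) :=
      mul_nonneg (mul_nonneg (mul_nonneg hq.le (mul_nonneg hl1.le hl1.le)) hg0.le) hd2.le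
    have := div_nonneg hnum hdd.le
    linarith [e ▸ this]

lemma aux_wphi (lam q : ℝ) (hlam : 1 < lam) (hq : 0 < q) :
    lam / (lam + q) ≤ lam * Real.exp (-max (Real.log q) 0) := by
  rcases le_total (Real.log q) 0 with h | h
  · rw [max_eq_right h]
    simp only [neg_zero, Real.exp_zero, mul_one]
    rw [div_le_iff₀ (by linarith)]
    nlinarith
  · rw [max_eq_left h, Real.exp_neg, Real.exp_log hq]
    have h2 : lam * (q)⁻¹ = lam / q := by ring
    rw [h2]
    apply div_le_div_of_nonneg_left (by linarith) hq (by linarith)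

lemma aux_wpsi (lam q : ℝ) (hlam : 1 < lam) (hq : 0 < q) :
    q / (lam + q) ≤ Real.exp (-max (-Real.log q) 0) := by
  rcases le_total (Real.log q) 0 with h | h
  · rw [max_eq_left (by linarith), neg_neg, Real.exp_log hq]
    rw [div_le_iff₀ (by linarith)]
    nlinarith
  · rw [max_eq_right (by linarith)]
    simp only [neg_zero, Real.exp_zero]
    rw [div_le_one (by linarith)]
    linarith

lemma aux_key1 (lam q : ℝ) (hlam : 1 < lam) (hq : 0 < q) :
    4 * q ≤ (1 + q) * (lam + q) ^ 2 := by
  nlinarith [sq_nonneg (1 - q), sq_nonneg (lam - 1), mul_pos hq hq]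

lemma aux_key2 (lam q : ℝ) (hlam : 1 < lam) (hq : 1 ≤ q) :
    4 * q ^ 2 ≤ (1 + q) * (lam + q) ^ 2 := by
  nlinarith [sq_nonneg (1 - q), sq_nonneg (lam - 1), mul_pos (lt_of_lt_of_le one_pos hq) (lt_of_lt_of_le one_pos hq)]

lemma aux_Lphi (lam q : ℝ) (hlam : 1 < lam) (hq : 0 < q) :
    (lam / (lam + q)) ^ 2 * q ≤ lam ^ 2 / 4 * Real.exp (-max (Real.log q) 0) * (1 + q) := by
  have hd : (0:ℝ) < lam + q := by linarith
  have hl0 : (0:ℝ) < lam := by linarith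
  rcases le_total q 1 with h | h
  · rw [max_eq_right (Real.log_nonpos hq.le h)]
    simp only [neg_zero, Real.exp_zero, mul_one]
    rw [div_pow, div_mul_eq_mul_div, div_le_iff₀ (by positivity)]
    have h5 := mul_le_mul_of_nonneg_left (aux_key1 lam q hlam hq) (by positivity : (0:ℝ) ≤ lam ^ 2 / 4)
    nlinarith [h5]
  · have h1 : (1:ℝ) ≤ q := h
    rw [max_eq_left (Real.log_nonneg h1), Real.exp_neg, Real.exp_log hq]
    have e1 : lam ^ 2 / 4 * q⁻¹ * (1 + q) = lam ^ 2 * (1 + q) / (4 * q) := by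
      field_simp
    rw [e1, div_pow, div_mul_eq_mul_div, div_le_div_iff₀ (by positivity) (by positivity)]
    have h5 := mul_le_mul_of_nonneg_left (aux_key2 lam q hlam h1) (sq_nonneg lam)
    nlinarith [h5]

lemma aux_Lpsi (lam q : ℝ) (hlam : 1 < lam) (hq : 0 < q) :
    (q / (lam + q)) ^ 2 ≤ lam ^ 2 / 4 * Real.exp (-max (-Real.log q) 0) * (1 + q) := by
  have hd : (0:ℝ) < lam + q := by linarith
  have hl0 : (0:ℝ) < lam := by linarith
  have hl2 : (0:ℝ) ≤ lam ^ 2 - 1 := by nlinarith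
  rcases le_total q 1 with h | h
  · rw [max_eq_left (by nlinarith [Real.log_nonpos hq.le h]), neg_neg, Real.exp_log hq]
    rw [div_pow, div_le_iff₀ (by positivity)]
    have h4 := mul_le_mul_of_nonneg_right (aux_key1 lam q hlam hq) hq.le
    nlinarith [h4, mul_nonneg hl2 (mul_nonneg (mul_nonneg hq.le hq.le) (sq_nonneg (lam + q)))]
  · rw [max_eq_right (by nlinarith [Real.log_nonneg h])]
    simp only [neg_zero, Real.exp_zero, mul_one]
    rw [div_pow, div_le_iff₀ (by positivity)]
    have h5 := mul_le_mul_of_nonneg_left (aux_key2 lam q hlam h) (by positivity : (0:ℝ) ≤ lam ^ 2 / 4)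
    nlinarith [h5, mul_nonneg hl2 (sq_nonneg q)]

lemma aux_mul4 {a1 a2 a3 a4 b1 b2 b3 b4 : ℝ} (h1 : 0 ≤ a1) (h2 : 0 ≤ a2) (h3 : 0 ≤ a3) (h4 : 0 ≤ a4)
    (e1 : a1 ≤ b1) (e2 : a2 ≤ b2) (e3 : a3 ≤ b3) (e4 : a4 ≤ b4) :
    a1 * a2 * a3 * a4 ≤ b1 * b2 * b3 * b4 :=
  mul_le_mul (mul_le_mul (mul_le_mul e1 e2 h2 (h1.trans e1)) e3 h3
    (mul_nonneg (h1.trans e1) (h2.trans e2))) e4 h4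
    (mul_nonneg (mul_nonneg (h1.trans e1) (h2.trans e2)) (h3.trans e3))

lemma aux_mul5 {a1 a2 a3 a4 a5 b1 b2 b3 b4 b5 : ℝ} (h1 : 0 ≤ a1) (h2 : 0 ≤ a2) (h3 : 0 ≤ a3)
    (h4 : 0 ≤ a4) (h5 : 0 ≤ a5)
    (e1 : a1 ≤ b1) (e2 : a2 ≤ b2) (e3 : a3 ≤ b3) (e4 : a4 ≤ b4) (e5 : a5 ≤ b5) :
    a1 * a2 * a3 * a4 * a5 ≤ b1 * b2 * b3 * b4 * b5 :=
  mul_le_mul (aux_mul4 h1 h2 h3 h4 e1 e2 e3 e4) e5 h5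
    (mul_nonneg (mul_nonneg (mul_nonneg (h1.trans e1) (h2.trans e2)) (h3.trans e3)) (h4.trans e4))

theorem stmt_15 (lam : ℝ) (hlam : 1 < lam)
    (γ : ℕ → ℝ) (hγ : ∀ k, 2 ≤ k → γ k ∈ Set.Ioo (0 : ℝ) 1)
    (g1 g2 : ℕ → ℝ)
    (hg11 : g1 1 ≠ 0) (hg21 : g2 1 ≠ 0) (hg12 : g1 2 ≠ 0) (hg22 : g2 2 ≠ 0)
    (q : ℕ → ℝ) (hq : ∀ j, q j = (g1 j) ^ 2 / (g2 j) ^ 2)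
    (α : ℕ → ℝ)
    (hα : ∀ k, 2 ≤ k → α k =
      γ k * (1 + q (k - 1)) / (lam + q (k - 1)) +
        (1 - γ k) * (lam + q (k - 1)) / (lam ^ 2 + q (k - 1)))
    (hup1 : ∀ k, 2 ≤ k → g1 (k + 1) = (1 - α k) * g1 k)
    (hup2 : ∀ k, 2 ≤ k → g2 (k + 1) = (1 - lam * α k) * g2 k)
    (c1 : ℝ) (hc1 : c1 = 2 * Real.log lam)
    (M : ℕ → ℝ) (hM : ∀ j, M j = Real.log (q j))
    (θ : ℂ) (hθ : θ = (1 + Real.sqrt 7 * Complex.I) / 2)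
    (ξ2 : ℂ) (hξ2def : ξ2 = (M 2 : ℂ) + (θ - 1) * (M 1 : ℂ))
    (hξ2 : 8 * Real.log lam < ‖ξ2‖) :
    ∀ k, 2 ≤ k →
      Real.sqrt ((g1 (k + 5)) ^ 2 + (g2 (k + 5)) ^ 2) ≤
        lam * (lam - 1) ^ 5 *
          Real.exp (-((Real.sqrt 2 - 1) ^ 2 * (2 : ℝ) ^ ((k : ℝ) / 2) * c1) + 2 * c1) *
          Real.sqrt ((g1 k) ^ 2 + (g2 k) ^ 2) := by
  intro k hk
  have hl0 : (0:ℝ) < lam := lt_trans one_pos hlam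
  have hl1 : (0:ℝ) < lam - 1 := sub_pos.2 hlam
  have hlog : 0 < Real.log lam := Real.log_pos hlam
  have hc1p : 0 < c1 := by rw [hc1]; linarith
  have hs2sq : Real.sqrt 2 ^ 2 = 2 := Real.sq_sqrt (by norm_num)
  have hs2pos : 0 < Real.sqrt 2 := Real.sqrt_pos.2 (by norm_num)
  have hs2gt1 : 1 < Real.sqrt 2 := by nlinarith
  -- nonvanishing along the trajectory
  have hgs : ∀ i, 1 ≤ i → (g1 i ≠ 0 ∧ g2 i ≠ 0) ∧ (g1 (i+1) ≠ 0 ∧ g2 (i+1) ≠ 0) := by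
    intro i hi
    induction i, hi using Nat.le_induction with
    | base => exact ⟨⟨hg11, hg21⟩, hg12, hg22⟩
    | succ n hn ih =>
      have hqn : 0 < q n := by
        rw [hq n]
        exact div_pos (lt_of_le_of_ne (sq_nonneg _) (Ne.symm (pow_ne_zero 2 ih.1.1)))
          (lt_of_le_of_ne (sq_nonneg _) (Ne.symm (pow_ne_zero 2 ih.1.2)))
      have hα' : α (n+1) = γ (n+1) * (1 + q n) / (lam + q n) +
          (1 - γ (n+1)) * (lam + q n) / (lam ^ 2 + q n) := by
        simpa using hα (n+1) (by omega)
      obtain ⟨ha1, -, hb1, -, -, -⟩ := aux_core lam (γ (n+1)) (q n) (α (n+1)) hlam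
        (hγ (n+1) (by omega)).1 (hγ (n+1) (by omega)).2 hqn hα'
      refine ⟨ih.2, ?_, ?_⟩
      · rw [hup1 (n+1) (by omega)]
        exact mul_ne_zero (ne_of_gt ha1) ih.2.1
      · rw [hup2 (n+1) (by omega)]
        exact mul_ne_zero (ne_of_lt (by linarith : 1 - lam * α (n+1) < 0)) ih.2.2
  have hqpos : ∀ i, 1 ≤ i → 0 < q i := by
    intro i hi
    obtain ⟨h1, h2⟩ := (hgs i hi).1
    rw [hq i]
    exact div_pos (lt_of_le_of_ne (sq_nonneg _) (Ne.symm (pow_ne_zero 2 h1)))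
      (lt_of_le_of_ne (sq_nonneg _) (Ne.symm (pow_ne_zero 2 h2)))
  have hstep : ∀ i, 2 ≤ i →
      0 < 1 - α i ∧ 1 - α i ≤ (lam - 1) * (lam / (lam + q (i-1))) ∧
      0 < lam * α i - 1 ∧ lam * α i - 1 ≤ (lam - 1) * (q (i-1) / (lam + q (i-1))) ∧
      lam * α i - 1 ≤ q (i-1) * (1 - α i) ∧ q (i-1) * (1 - α i) ≤ lam * (lam * α i - 1) := by
    intro i hi
    exact aux_core lam (γ i) (q (i-1)) (α i) hlam (hγ i hi).1 (hγ i hi).2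
      (hqpos (i-1) (by omega)) (hα i hi)
  -- the epsilon bounds
  have heps : ∀ j, 2 ≤ j → 0 ≤ M (j+1) - M j + 2 * M (j-1) ∧ M (j+1) - M j + 2 * M (j-1) ≤ c1 := by
    intro j hj
    obtain ⟨ha1, ha2, hb1, hb2, hw1, hw2⟩ := hstep j hj
    have hQ0 : 0 < q (j-1) := hqpos _ (by omega)
    have hQ1 : 0 < q j := hqpos _ (by omega)
    have hg2j : g2 j ≠ 0 := ((hgs j (by omega)).1).2
    have hbq : (lam * α j - 1) ≠ 0 := ne_of_gt hb1
    have hbne : (1 - lam * α j) ≠ 0 := ne_of_lt (by linarith)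
    have hQ2eq : q (j+1) = q j * (1 - α j)^2 / (lam * α j - 1)^2 := by
      rw [hq (j+1), hq j, hup1 j hj, hup2 j hj, mul_pow, mul_pow]
      rw [show (1 - lam * α j)^2 = (lam * α j - 1)^2 by ring]
      field_simp
    have hlogQ2 : Real.log (q (j+1)) = Real.log (q j) + 2 * Real.log (1 - α j)
        - 2 * Real.log (lam * α j - 1) := by
      rw [hQ2eq, Real.log_div (by positivity) (pow_ne_zero _ hbq),
        Real.log_mul hQ1.ne' (pow_ne_zero _ (ne_of_gt ha1)), Real.log_pow, Real.log_pow]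
      push_cast; ring
    have hwpos : 0 < q (j-1) * (1 - α j) / (lam * α j - 1) := div_pos (mul_pos hQ0 ha1) hb1
    have hw_ge : 1 ≤ q (j-1) * (1 - α j) / (lam * α j - 1) := by
      rw [le_div_iff₀ hb1]; linarith
    have hw_le : q (j-1) * (1 - α j) / (lam * α j - 1) ≤ lam := by
      rw [div_le_iff₀ hb1]; linarith
    have hlogw : Real.log (q (j-1) * (1 - α j) / (lam * α j - 1)) =
        Real.log (q (j-1)) + Real.log (1 - α j) - Real.log (lam * α j - 1) := by
      rw [Real.log_div (mul_ne_zero hQ0.ne' (ne_of_gt ha1)) hbq, Real.log_mul hQ0.ne' (ne_of_gt ha1)]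
    have h0 : 0 ≤ Real.log (q (j-1) * (1 - α j) / (lam * α j - 1)) := Real.log_nonneg hw_ge
    have h1 : Real.log (q (j-1) * (1 - α j) / (lam * α j - 1)) ≤ Real.log lam :=
      Real.log_le_log hwpos hw_le
    rw [hlogw] at h0 h1
    constructor
    · simp only [hM]; rw [hlogQ2]; linarith
    · simp only [hM]; rw [hlogQ2, hc1]; linarith
  -- theta facts
  have h7 : Real.sqrt 7 ^ 2 = 7 := Real.sq_sqrt (by norm_num)
  have h7c : ((Real.sqrt 7 : ℝ) : ℂ) ^ 2 = 7 := by
    rw [← Complex.ofReal_pow, h7]; norm_num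
  have hθq : θ ^ 2 - θ + 2 = 0 := by
    rw [hθ]
    linear_combination (Complex.I ^ 2 / 4) * h7c + (7 / 4 : ℂ) * Complex.I_sq
  have hθ2 : θ = ((1/2 : ℝ) : ℂ) + ((Real.sqrt 7 / 2 : ℝ) : ℂ) * Complex.I := by
    rw [hθ]; push_cast; ring
  have hθre : θ.re = 1/2 := by rw [hθ2]; simp
  have hθim : θ.im = Real.sqrt 7 / 2 := by rw [hθ2]; simp
  have habsθ : ‖θ‖ = Real.sqrt 2 := by
    have h1 : ‖θ‖ ^ 2 = 2 := by
      rw [Complex.sq_norm, Complex.normSq_apply, hθre, hθim]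
      nlinarith [h7]
    have h2 := Real.sqrt_sq (norm_nonneg θ)
    rw [h1] at h2
    exact h2.symm
  -- |Xi j|^2 formula
  have hXire : ∀ j : ℕ, (‖(M j : ℂ) + (θ - 1) * (M (j-1) : ℂ)‖) ^ 2
      = (M j - M (j-1) / 2) ^ 2 + 7 / 4 * (M (j-1)) ^ 2 := by
    intro j
    rw [Complex.sq_norm, Complex.normSq_apply]
    have e1 : ((M j : ℂ) + (θ - 1) * (M (j-1) : ℂ)).re = M j + (θ.re - 1) * M (j-1) := by
      simp [Complex.add_re, Complex.sub_re, Complex.mul_re]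
    have e2 : ((M j : ℂ) + (θ - 1) * (M (j-1) : ℂ)).im = θ.im * M (j-1) := by
      simp [Complex.add_im, Complex.sub_im, Complex.mul_im]
    rw [e1, e2, hθre, hθim]
    linear_combination ((M (j-1))^2/4) * h7
  -- recursion for Xi
  have hrec : ∀ j, 2 ≤ j → ((M (j+1) : ℂ) + (θ - 1) * (M j : ℂ)) =
      θ * ((M j : ℂ) + (θ - 1) * (M (j-1) : ℂ)) + ((M (j+1) - M j + 2 * M (j-1) : ℝ) : ℂ) := by
    intro j hj
    push_cast
    linear_combination (-(M (j-1) : ℂ)) * hθq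
  -- lower bound on |Xi j|
  have hlow : ∀ j, 2 ≤ j → (Real.sqrt 2) ^ (j-2) * (‖ξ2‖ - (Real.sqrt 2 + 1) * c1)
      + (Real.sqrt 2 + 1) * c1 ≤ ‖(M j : ℂ) + (θ - 1) * (M (j-1) : ℂ)‖ := by
    intro j hj
    induction j, hj using Nat.le_induction with
    | base =>
      norm_num
      rw [← hξ2def]
    | succ n hn ih =>
      simp only [Nat.add_sub_cancel]
      have hrecn := hrec n hn
      have hepsn := heps n hn
      have htri : ‖θ * ((M n : ℂ) + (θ - 1) * (M (n-1) : ℂ))‖ ≤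
          ‖(M (n+1) : ℂ) + (θ - 1) * (M n : ℂ)‖ + c1 := by
        have h1 := norm_add_le (((M (n+1) : ℂ) + (θ - 1) * (M n : ℂ)))
          (-((M (n+1) - M n + 2 * M (n-1) : ℝ) : ℂ))
        have h2 : ((M (n+1) : ℂ) + (θ - 1) * (M n : ℂ)) + (-((M (n+1) - M n + 2 * M (n-1) : ℝ) : ℂ))
            = θ * ((M n : ℂ) + (θ - 1) * (M (n-1) : ℂ)) := by
          rw [hrecn]; ring
        rw [h2] at h1
        have h3 : ‖-((M (n+1) - M n + 2 * M (n-1) : ℝ) : ℂ)‖ ≤ c1 := by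
          rw [norm_neg, Complex.norm_real, Real.norm_eq_abs, abs_of_nonneg hepsn.1]
          exact hepsn.2
        linarith
      have hmul : ‖θ * ((M n : ℂ) + (θ - 1) * (M (n-1) : ℂ))‖ =
          Real.sqrt 2 * ‖(M n : ℂ) + (θ - 1) * (M (n-1) : ℂ)‖ := by
        rw [norm_mul, habsθ]
      have hpow : (Real.sqrt 2) ^ (n+1-2) = Real.sqrt 2 * (Real.sqrt 2) ^ (n-2) := by
        rw [show n+1-2 = (n-2)+1 by omega, pow_succ]; ring
      have hmono := mul_le_mul_of_nonneg_left ih (le_of_lt hs2pos)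
      have hKk : Real.sqrt 2 * ((Real.sqrt 2 + 1) * c1) - c1 = (Real.sqrt 2 + 1) * c1 := by
        linear_combination c1 * hs2sq
      rw [hpow]
      linarith [htri, hmul, hmono, hKk]
  -- rpow conversion
  have hQ2k : (2:ℝ) ^ ((k:ℝ)/2) = 2 * (Real.sqrt 2) ^ (k-2) := by
    have h1 : (2:ℝ) ^ ((k:ℝ)/2) = (Real.sqrt 2) ^ (k:ℕ) := by
      rw [Real.sqrt_eq_rpow, ← Real.rpow_natCast ((2:ℝ) ^ ((1:ℝ)/2)) k,
        ← Real.rpow_mul (by norm_num : (0:ℝ) ≤ 2)]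
      congr 1
      ring
    have h2 : (Real.sqrt 2)^(k:ℕ) = (Real.sqrt 2)^2 * (Real.sqrt 2)^(k-2) := by
      rw [← pow_add]; congr 1; omega
    rw [h1, h2, Real.sq_sqrt (by norm_num : (0:ℝ) ≤ 2)]
  set DD := (Real.sqrt 2 - 1) ^ 2 * (2 : ℝ) ^ ((k : ℝ) / 2) * c1 with hDD
  have hDD0 : 0 ≤ DD := by
    rw [hDD]
    exact mul_nonneg (mul_nonneg (sq_nonneg _) (le_of_lt (Real.rpow_pos_of_pos two_pos _))) hc1p.le
  have hDconv : DD = (Real.sqrt 2 - 1)^2 * (2*(Real.sqrt 2)^(k-2)) * c1 := by rw [hDD, hQ2k]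
  -- step data at k..k+4
  have st0 := hstep k hk
  have st1 := hstep (k+1) (by omega)
  have st2 := hstep (k+2) (by omega)
  have st3 := hstep (k+3) (by omega)
  have st4 := hstep (k+4) (by omega)
  rw [show k+1-1 = k by omega] at st1
  rw [show k+2-1 = k+1 by omega] at st2
  rw [show k+3-1 = k+2 by omega] at st3
  rw [show k+4-1 = k+3 by omega] at st4
  have hq0 := hqpos (k-1) (by omega)
  have hq1 := hqpos k (by omega)
  have hq2 := hqpos (k+1) (by omega)
  have hq3 := hqpos (k+2) (by omega)
  have hq4 := hqpos (k+3) (by omega)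
  -- products
  set A := (1 - α (k+4)) * (1 - α (k+3)) * (1 - α (k+2)) * (1 - α (k+1)) * (1 - α k) with hA
  set B := (lam * α (k+4) - 1) * (lam * α (k+3) - 1) * (lam * α (k+2) - 1) * (lam * α (k+1) - 1)
    * (lam * α k - 1) with hB
  have hgA : g1 (k+5) = A * g1 k := by
    have e5 : g1 (k+5) = (1 - α (k+4)) * g1 (k+4) := by
      have h := hup1 (k+4) (by omega); rw [show k+4+1 = k+5 by omega] at h; exact h
    have e4 : g1 (k+4) = (1 - α (k+3)) * g1 (k+3) := by
      have h := hup1 (k+3) (by omega); rw [show k+3+1 = k+4 by omega] at h; exact h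
    have e3 : g1 (k+3) = (1 - α (k+2)) * g1 (k+2) := by
      have h := hup1 (k+2) (by omega); rw [show k+2+1 = k+3 by omega] at h; exact h
    have e2 : g1 (k+2) = (1 - α (k+1)) * g1 (k+1) := by
      have h := hup1 (k+1) (by omega); rw [show k+1+1 = k+2 by omega] at h; exact h
    have e1 : g1 (k+1) = (1 - α k) * g1 k := hup1 k hk
    rw [e5, e4, e3, e2, e1, hA]; ring
  have hgB : g2 (k+5) = ((1 - lam * α (k+4)) * (1 - lam * α (k+3)) * (1 - lam * α (k+2))
      * (1 - lam * α (k+1)) * (1 - lam * α k)) * g2 k := by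
    have e5 : g2 (k+5) = (1 - lam * α (k+4)) * g2 (k+4) := by
      have h := hup2 (k+4) (by omega); rw [show k+4+1 = k+5 by omega] at h; exact h
    have e4 : g2 (k+4) = (1 - lam * α (k+3)) * g2 (k+3) := by
      have h := hup2 (k+3) (by omega); rw [show k+3+1 = k+4 by omega] at h; exact h
    have e3 : g2 (k+3) = (1 - lam * α (k+2)) * g2 (k+2) := by
      have h := hup2 (k+2) (by omega); rw [show k+2+1 = k+3 by omega] at h; exact h
    have e2 : g2 (k+2) = (1 - lam * α (k+1)) * g2 (k+1) := by
      have h := hup2 (k+1) (by omega); rw [show k+1+1 = k+2 by omega] at h; exact h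
    have e1 : g2 (k+1) = (1 - lam * α k) * g2 k := hup2 k hk
    rw [e5, e4, e3, e2, e1]; ring
  have hgA2 : g1 (k+5)^2 = A^2 * g1 k^2 := by rw [hgA]; ring
  have hgB2 : g2 (k+5)^2 = B^2 * g2 k^2 := by rw [hgB, hB]; ring
  -- weights
  set p0 := lam / (lam + q (k-1)) with hp0
  set p1 := lam / (lam + q k) with hp1
  set p2 := lam / (lam + q (k+1)) with hp2
  set p3 := lam / (lam + q (k+2)) with hp3
  set p4 := lam / (lam + q (k+3)) with hp4
  set r0 := q (k-1) / (lam + q (k-1)) with hr0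
  set r1 := q k / (lam + q k) with hr1
  set r2 := q (k+1) / (lam + q (k+1)) with hr2
  set r3 := q (k+2) / (lam + q (k+2)) with hr3
  set r4 := q (k+3) / (lam + q (k+3)) with hr4
  have hp0n : 0 ≤ p0 := div_nonneg hl0.le (by linarith)
  have hp1n : 0 ≤ p1 := div_nonneg hl0.le (by linarith)
  have hp2n : 0 ≤ p2 := div_nonneg hl0.le (by linarith)
  have hp3n : 0 ≤ p3 := div_nonneg hl0.le (by linarith)
  have hp4n : 0 ≤ p4 := div_nonneg hl0.le (by linarith)
  have hr0n : 0 ≤ r0 := div_nonneg hq0.le (by linarith)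
  have hr1n : 0 ≤ r1 := div_nonneg hq1.le (by linarith)
  have hr2n : 0 ≤ r2 := div_nonneg hq2.le (by linarith)
  have hr3n : 0 ≤ r3 := div_nonneg hq3.le (by linarith)
  have hr4n : 0 ≤ r4 := div_nonneg hq4.le (by linarith)
  have hA0 : 0 ≤ A := by
    rw [hA]
    exact le_of_lt (mul_pos (mul_pos (mul_pos (mul_pos st4.1 st3.1) st2.1) st1.1) st0.1)
  have hB0 : 0 ≤ B := by
    rw [hB]
    exact le_of_lt (mul_pos (mul_pos (mul_pos (mul_pos st4.2.2.1 st3.2.2.1) st2.2.2.1)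
      st1.2.2.1) st0.2.2.1)
  have hAle : A ≤ (lam - 1)^5 * (p4 * p3 * p2 * p1 * p0) := by
    have h := aux_mul5 st4.1.le st3.1.le st2.1.le st1.1.le st0.1.le
      st4.2.1 st3.2.1 st2.2.1 st1.2.1 st0.2.1
    rw [hA]
    calc (1 - α (k+4)) * (1 - α (k+3)) * (1 - α (k+2)) * (1 - α (k+1)) * (1 - α k)
        ≤ ((lam-1)*p4) * ((lam-1)*p3) * ((lam-1)*p2) * ((lam-1)*p1) * ((lam-1)*p0) := h
      _ = (lam - 1)^5 * (p4 * p3 * p2 * p1 * p0) := by ring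
  have hBle : B ≤ (lam - 1)^5 * (r4 * r3 * r2 * r1 * r0) := by
    have h := aux_mul5 st4.2.2.1.le st3.2.2.1.le st2.2.2.1.le st1.2.2.1.le st0.2.2.1.le
      st4.2.2.2.1 st3.2.2.2.1 st2.2.2.2.1 st1.2.2.2.1 st0.2.2.2.1
    rw [hB]
    calc (lam * α (k+4) - 1) * (lam * α (k+3) - 1) * (lam * α (k+2) - 1) * (lam * α (k+1) - 1)
          * (lam * α k - 1)
        ≤ ((lam-1)*r4) * ((lam-1)*r3) * ((lam-1)*r2) * ((lam-1)*r1) * ((lam-1)*r0) := h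
      _ = (lam - 1)^5 * (r4 * r3 * r2 * r1 * r0) := by ring
  -- THE KEY INEQUALITY
  have hKEY : (p4*p3*p2*p1*p0)^2 * q k + (r4*r3*r2*r1*r0)^2 ≤
      lam^10 * Real.exp (-(2*DD)) * (1 + q k) := by
    have hsq1 : (Real.sqrt 2 - 1)^2 = 3 - 2*Real.sqrt 2 := by linear_combination hs2sq
    rcases le_or_gt k 7 with hk7 | hk8
    · -- small k : trivial contraction suffices
      have h5eq : (Real.sqrt 2)^5 = 4 * Real.sqrt 2 := by
        have e : (Real.sqrt 2)^5 = ((Real.sqrt 2)^2)^2 * Real.sqrt 2 := by ring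
        rw [e, hs2sq]; norm_num
      have hppow : (Real.sqrt 2)^(k-2) ≤ 4 * Real.sqrt 2 := by
        rw [← h5eq]; exact pow_le_pow_right₀ hs2gt1.le (by omega)
      have hts : 0 ≤ (Real.sqrt 2)^(k-2) := pow_nonneg hs2pos.le _
      have h3s : (0:ℝ) ≤ 3 - 2*Real.sqrt 2 := by
        linarith [hs2sq, sq_nonneg (2*Real.sqrt 2 - 3)]
      have hprod : ((Real.sqrt 2)^(k-2)) * (3 - 2*Real.sqrt 2)
          ≤ (4*Real.sqrt 2) * (3 - 2*Real.sqrt 2) := mul_le_mul_of_nonneg_right hppow h3s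
      have h45 : (4*Real.sqrt 2) * (3-2*Real.sqrt 2) ≤ 5/4 := by
        linarith [hs2sq, sq_nonneg (Real.sqrt 2 - 1.4375)]
      have hcomb : (Real.sqrt 2)^(k-2) * (3 - 2*Real.sqrt 2) ≤ 5/4 := hprod.trans h45
      have hDle : 2*DD ≤ 10 * Real.log lam := by
        rw [hDconv, hc1, hsq1]
        have hmm := mul_le_mul_of_nonneg_right hcomb hlog.le
        linarith [hmm]
      have h10' : Real.exp (10*Real.log lam) = lam^10 := by
        rw [show (10:ℝ) = ((10:ℕ):ℝ) by norm_num, Real.exp_nat_mul, Real.exp_log hl0]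
      have h10 : Real.exp (2*DD) ≤ lam^10 := by
        rw [← h10']; exact Real.exp_le_exp.2 hDle
      have hT1 : 1 ≤ lam^10 * Real.exp (-(2*DD)) := by
        rw [Real.exp_neg, ← div_eq_mul_inv, le_div_iff₀ (Real.exp_pos _)]
        linarith
      have hp0le : p0 ≤ 1 := by rw [hp0, div_le_one (by linarith)]; linarith
      have hp1le : p1 ≤ 1 := by rw [hp1, div_le_one (by linarith)]; linarith
      have hp2le : p2 ≤ 1 := by rw [hp2, div_le_one (by linarith)]; linarith
      have hp3le : p3 ≤ 1 := by rw [hp3, div_le_one (by linarith)]; linarith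
      have hp4le : p4 ≤ 1 := by rw [hp4, div_le_one (by linarith)]; linarith
      have hr0le : r0 ≤ 1 := by rw [hr0, div_le_one (by linarith)]; linarith
      have hr1le : r1 ≤ 1 := by rw [hr1, div_le_one (by linarith)]; linarith
      have hr2le : r2 ≤ 1 := by rw [hr2, div_le_one (by linarith)]; linarith
      have hr3le : r3 ≤ 1 := by rw [hr3, div_le_one (by linarith)]; linarith
      have hr4le : r4 ≤ 1 := by rw [hr4, div_le_one (by linarith)]; linarith
      have hPhi1 : p4*p3*p2*p1*p0 ≤ 1 := by
        have h := aux_mul5 hp4n hp3n hp2n hp1n hp0n hp4le hp3le hp2le hp1le hp0le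
        simpa using h
      have hPsi1 : r4*r3*r2*r1*r0 ≤ 1 := by
        have h := aux_mul5 hr4n hr3n hr2n hr1n hr0n hr4le hr3le hr2le hr1le hr0le
        simpa using h
      have hPhin : 0 ≤ p4*p3*p2*p1*p0 :=
        mul_nonneg (mul_nonneg (mul_nonneg (mul_nonneg hp4n hp3n) hp2n) hp1n) hp0n
      have hPsin : 0 ≤ r4*r3*r2*r1*r0 :=
        mul_nonneg (mul_nonneg (mul_nonneg (mul_nonneg hr4n hr3n) hr2n) hr1n) hr0n
      have hh1 : (p4*p3*p2*p1*p0)^2 * q k ≤ 1 * q k :=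
        mul_le_mul_of_nonneg_right (pow_le_one₀ hPhin hPhi1) hq1.le
      have hh2 : (r4*r3*r2*r1*r0)^2 ≤ 1 := pow_le_one₀ hPsin hPsi1
      have hT1' := mul_le_mul_of_nonneg_right hT1 (by linarith : (0:ℝ) ≤ 1 + q k)
      linarith [hh1, hh2, hT1']
    · -- large k : use the xi dynamics
      have hid1 := heps k hk
      have hid2' := heps (k+1) (by omega)
      rw [show k+1-1 = k by omega] at hid2'
      have h6eq : (Real.sqrt 2)^6 = 8 := by
        have e : (Real.sqrt 2)^6 = ((Real.sqrt 2)^2)^3 := by ring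
        rw [e, hs2sq]; norm_num
      have hP8 : (8:ℝ) ≤ (Real.sqrt 2)^(k-2) := by
        rw [← h6eq]; exact pow_le_pow_right₀ hs2gt1.le (by omega)
      have hcontra : ¬ (|M k| ≤ 3*DD + 2*c1 ∧ |M (k-1)| ≤ 3*DD/2 + c1) := by
        rintro ⟨hMk, hMk1⟩
        obtain ⟨l1, l2⟩ := abs_le.mp hMk
        obtain ⟨l3, l4⟩ := abs_le.mp hMk1
        have hub : (‖(M k : ℂ) + (θ - 1) * (M (k-1) : ℂ)‖)^2
            ≤ 18*(DD + 2/3*c1)^2 := by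
          rw [hXire k]
          linarith [mul_nonneg (by linarith : (0:ℝ) ≤ 3*DD+2*c1 - M k)
              (by linarith : (0:ℝ) ≤ 3*DD/2 + c1 - M (k-1)),
            mul_nonneg (by linarith : (0:ℝ) ≤ 3*DD+2*c1 + M k)
              (by linarith : (0:ℝ) ≤ 3*DD/2 + c1 + M (k-1)),
            mul_nonneg (by linarith : (0:ℝ) ≤ 3*DD+2*c1 - M k)
              (by linarith : (0:ℝ) ≤ 3*DD+2*c1 + M k),
            mul_nonneg (by linarith : (0:ℝ) ≤ 3*DD/2 + c1 - M (k-1))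
              (by linarith : (0:ℝ) ≤ 3*DD/2+c1 + M (k-1))]
        have hlowk := hlow k hk
        have hX : (3 - Real.sqrt 2)*c1 < ‖ξ2‖ - (Real.sqrt 2 + 1)*c1 := by
          have h4c : 4*c1 = 8*Real.log lam := by rw [hc1]; ring
          linarith [h4c, hξ2]
        have hPpos : (0:ℝ) < (Real.sqrt 2)^(k-2) := pow_pos hs2pos _
        have hstrict : (Real.sqrt 2)^(k-2)*((3 - Real.sqrt 2)*c1)
            < (Real.sqrt 2)^(k-2)*(‖ξ2‖ - (Real.sqrt 2+1)*c1) :=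
          mul_lt_mul_of_pos_left hX hPpos
        have h19 : (0:ℝ) ≤ 27 - 19*Real.sqrt 2 := by
          linarith [hs2sq, sq_nonneg (19*Real.sqrt 2 - 27)]
        have h217 : (0:ℝ) ≤ 217 - 153*Real.sqrt 2 := by
          linarith [hs2sq, sq_nonneg (153*Real.sqrt 2 - 217)]
        have hlin : 3*Real.sqrt 2*(DD + 2/3*c1) ≤
            (Real.sqrt 2)^(k-2)*((3 - Real.sqrt 2)*c1) + (Real.sqrt 2+1)*c1 := by
          rw [hDconv, hsq1]
          have f1 : (0:ℝ) ≤ ((Real.sqrt 2)^(k-2) - 8)*((27-19*Real.sqrt 2)*c1) :=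
            mul_nonneg (by linarith) (mul_nonneg h19 hc1p.le)
          have f2 : (0:ℝ) ≤ (217 - 153*Real.sqrt 2)*c1 := mul_nonneg h217 hc1p.le
          have f3 : Real.sqrt 2^2*((Real.sqrt 2)^(k-2)*c1) = 2*((Real.sqrt 2)^(k-2)*c1) := by
            rw [hs2sq]
          linarith [f1, f2, f3]
        have hgoal : 3*Real.sqrt 2*(DD + 2/3*c1)
            < ‖(M k : ℂ) + (θ - 1) * (M (k-1) : ℂ)‖ := by
          calc 3*Real.sqrt 2*(DD + 2/3*c1)
              ≤ (Real.sqrt 2)^(k-2)*((3 - Real.sqrt 2)*c1) + (Real.sqrt 2+1)*c1 := hlin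
            _ < (Real.sqrt 2)^(k-2)*(‖ξ2‖ - (Real.sqrt 2+1)*c1) + (Real.sqrt 2+1)*c1 := by
                linarith
            _ ≤ _ := hlowk
        have hnn : (0:ℝ) ≤ 3*Real.sqrt 2*(DD + 2/3*c1) :=
          mul_nonneg (mul_nonneg (by norm_num) hs2pos.le) (by linarith)
        have hsq2 : (3*Real.sqrt 2*(DD + 2/3*c1))^2 = 18*(DD + 2/3*c1)^2 := by
          linear_combination (9*(DD + 2/3*c1)^2) * hs2sq
        have hyx : (0:ℝ) < ‖(M k : ℂ) + (θ - 1) * (M (k-1) : ℂ)‖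
            + 3*Real.sqrt 2*(DD + 2/3*c1) := by linarith
        linarith [hub, hsq2, mul_pos (sub_pos.2 hgoal) hyx]
      have hC1 : 2*DD ≤ max (M k) 0
          + 2*(max (M (k-1)) 0 + max (M (k+1)) 0 + max (M (k+2)) 0 + max (M (k+3)) 0) := by
        by_contra hcon
        push_neg at hcon
        apply hcontra
        have j0 : (0:ℝ) ≤ max (M (k-1)) 0 := le_max_right _ _
        have j1 : (0:ℝ) ≤ max (M k) 0 := le_max_right _ _
        have j2 : (0:ℝ) ≤ max (M (k+1)) 0 := le_max_right _ _
        have j3 : (0:ℝ) ≤ max (M (k+2)) 0 := le_max_right _ _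
        have j4 : (0:ℝ) ≤ max (M (k+3)) 0 := le_max_right _ _
        have i0 : M (k-1) ≤ max (M (k-1)) 0 := le_max_left _ _
        have i1 : M k ≤ max (M k) 0 := le_max_left _ _
        have i3 : M (k+2) ≤ max (M (k+2)) 0 := le_max_left _ _
        constructor
        · rw [abs_le]
          constructor
          · linarith [hid1.1, hid2'.1]
          · linarith
        · rw [abs_le]
          constructor
          · linarith [hid1.1, hid2'.1]
          · linarith
      have hC2 : 2*DD ≤ max (-M k) 0
          + 2*(max (-M (k-1)) 0 + max (-M (k+1)) 0 + max (-M (k+2)) 0 + max (-M (k+3)) 0) := by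
        by_contra hcon
        push_neg at hcon
        apply hcontra
        have j0 : (0:ℝ) ≤ max (-M (k-1)) 0 := le_max_right _ _
        have j1 : (0:ℝ) ≤ max (-M k) 0 := le_max_right _ _
        have j2 : (0:ℝ) ≤ max (-M (k+1)) 0 := le_max_right _ _
        have j3 : (0:ℝ) ≤ max (-M (k+2)) 0 := le_max_right _ _
        have j4 : (0:ℝ) ≤ max (-M (k+3)) 0 := le_max_right _ _
        have i0 : -M (k-1) ≤ max (-M (k-1)) 0 := le_max_left _ _
        have i1 : -M k ≤ max (-M k) 0 := le_max_left _ _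
        have i3 : -M (k+2) ≤ max (-M (k+2)) 0 := le_max_left _ _
        constructor
        · rw [abs_le]
          constructor
          · linarith
          · linarith [hid1.2, hid2'.2]
        · rw [abs_le]
          constructor
          · linarith
          · linarith [hid1.2, hid2'.2]
      -- weight upper bounds in terms of exponentials
      have hb0 : p0 ≤ lam * Real.exp (-max (M (k-1)) 0) := by
        rw [hp0]
        have h := aux_wphi lam (q (k-1)) hlam hq0
        rwa [← hM (k-1)] at h
      have hb2 : p2 ≤ lam * Real.exp (-max (M (k+1)) 0) := by
        rw [hp2]
        have h := aux_wphi lam (q (k+1)) hlam hq2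
        rwa [← hM (k+1)] at h
      have hb3 : p3 ≤ lam * Real.exp (-max (M (k+2)) 0) := by
        rw [hp3]
        have h := aux_wphi lam (q (k+2)) hlam hq3
        rwa [← hM (k+2)] at h
      have hb4 : p4 ≤ lam * Real.exp (-max (M (k+3)) 0) := by
        rw [hp4]
        have h := aux_wphi lam (q (k+3)) hlam hq4
        rwa [← hM (k+3)] at h
      have hLp : p1^2 * q k ≤ lam^2/4 * Real.exp (-max (M k) 0) * (1 + q k) := by
        rw [hp1]
        have h := aux_Lphi lam (q k) hlam hq1
        rwa [← hM k] at h
      have hc0 : r0 ≤ Real.exp (-max (-M (k-1)) 0) := by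
        rw [hr0]
        have h := aux_wpsi lam (q (k-1)) hlam hq0
        rwa [← hM (k-1)] at h
      have hc2 : r2 ≤ Real.exp (-max (-M (k+1)) 0) := by
        rw [hr2]
        have h := aux_wpsi lam (q (k+1)) hlam hq2
        rwa [← hM (k+1)] at h
      have hc3 : r3 ≤ Real.exp (-max (-M (k+2)) 0) := by
        rw [hr3]
        have h := aux_wpsi lam (q (k+2)) hlam hq3
        rwa [← hM (k+2)] at h
      have hc4 : r4 ≤ Real.exp (-max (-M (k+3)) 0) := by
        rw [hr4]
        have h := aux_wpsi lam (q (k+3)) hlam hq4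
        rwa [← hM (k+3)] at h
      have hLr : r1^2 ≤ lam^2/4 * Real.exp (-max (-M k) 0) * (1 + q k) := by
        rw [hr1]
        have h := aux_Lpsi lam (q k) hlam hq1
        rwa [← hM k] at h
      have hga : p0*p2*p3*p4 ≤ (lam * Real.exp (-max (M (k-1)) 0)) * (lam * Real.exp (-max (M (k+1)) 0))
          * (lam * Real.exp (-max (M (k+2)) 0)) * (lam * Real.exp (-max (M (k+3)) 0)) :=
        aux_mul4 hp0n hp2n hp3n hp4n hb0 hb2 hb3 hb4
      have hgan : 0 ≤ p0*p2*p3*p4 :=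
        mul_nonneg (mul_nonneg (mul_nonneg hp0n hp2n) hp3n) hp4n
      have hgb : r0*r2*r3*r4 ≤ Real.exp (-max (-M (k-1)) 0) * Real.exp (-max (-M (k+1)) 0)
          * Real.exp (-max (-M (k+2)) 0) * Real.exp (-max (-M (k+3)) 0) :=
        aux_mul4 hr0n hr2n hr3n hr4n hc0 hc2 hc3 hc4
      have hgbn : 0 ≤ r0*r2*r3*r4 :=
        mul_nonneg (mul_nonneg (mul_nonneg hr0n hr2n) hr3n) hr4n
      have hTa : (p4*p3*p2*p1*p0)^2 * q k ≤ lam^10/4 * Real.exp (-(max (M k) 0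
          + 2*(max (M (k-1)) 0 + max (M (k+1)) 0 + max (M (k+2)) 0 + max (M (k+3)) 0)))
          * (1 + q k) := by
        have e : (p4*p3*p2*p1*p0)^2 * q k = (p0*p2*p3*p4)^2 * (p1^2 * q k) := by ring
        rw [e]
        calc (p0*p2*p3*p4)^2 * (p1^2 * q k)
            ≤ ((lam * Real.exp (-max (M (k-1)) 0)) * (lam * Real.exp (-max (M (k+1)) 0))
              * (lam * Real.exp (-max (M (k+2)) 0)) * (lam * Real.exp (-max (M (k+3)) 0)))^2
              * (lam^2/4 * Real.exp (-max (M k) 0) * (1 + q k)) := by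
              apply mul_le_mul (pow_le_pow_left₀ hgan hga 2) hLp
                (mul_nonneg (sq_nonneg _) hq1.le) (sq_nonneg _)
          _ = lam^10/4 * (Real.exp (-max (M (k-1)) 0) * Real.exp (-max (M (k+1)) 0)
              * Real.exp (-max (M (k+2)) 0) * Real.exp (-max (M (k+3)) 0)
              * Real.exp (-max (M (k-1)) 0) * Real.exp (-max (M (k+1)) 0)
              * Real.exp (-max (M (k+2)) 0) * Real.exp (-max (M (k+3)) 0)
              * Real.exp (-max (M k) 0)) * (1 + q k) := by ring
          _ = lam^10/4 * Real.exp (-(max (M k) 0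
              + 2*(max (M (k-1)) 0 + max (M (k+1)) 0 + max (M (k+2)) 0 + max (M (k+3)) 0)))
              * (1 + q k) := by
              simp only [← Real.exp_add]
              congr 2
              ring
      have hTb : (r4*r3*r2*r1*r0)^2 ≤ lam^10/4 * Real.exp (-(max (-M k) 0
          + 2*(max (-M (k-1)) 0 + max (-M (k+1)) 0 + max (-M (k+2)) 0 + max (-M (k+3)) 0)))
          * (1 + q k) := by
        have e : (r4*r3*r2*r1*r0)^2 = (r0*r2*r3*r4)^2 * r1^2 := by ring
        rw [e]
        have hstep1 : (r0*r2*r3*r4)^2 * r1^2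
            ≤ (Real.exp (-max (-M (k-1)) 0) * Real.exp (-max (-M (k+1)) 0)
              * Real.exp (-max (-M (k+2)) 0) * Real.exp (-max (-M (k+3)) 0))^2
              * (lam^2/4 * Real.exp (-max (-M k) 0) * (1 + q k)) :=
          mul_le_mul (pow_le_pow_left₀ hgbn hgb 2) hLr (sq_nonneg _) (sq_nonneg _)
        have hstep2 : (Real.exp (-max (-M (k-1)) 0) * Real.exp (-max (-M (k+1)) 0)
              * Real.exp (-max (-M (k+2)) 0) * Real.exp (-max (-M (k+3)) 0))^2
              * (lam^2/4 * Real.exp (-max (-M k) 0) * (1 + q k))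
            = lam^2/4 * Real.exp (-(max (-M k) 0
              + 2*(max (-M (k-1)) 0 + max (-M (k+1)) 0 + max (-M (k+2)) 0 + max (-M (k+3)) 0)))
              * (1 + q k) := by
          rw [show (Real.exp (-max (-M (k-1)) 0) * Real.exp (-max (-M (k+1)) 0)
              * Real.exp (-max (-M (k+2)) 0) * Real.exp (-max (-M (k+3)) 0))^2
              * (lam^2/4 * Real.exp (-max (-M k) 0) * (1 + q k))
            = lam^2/4 * (Real.exp (-max (-M (k-1)) 0) * Real.exp (-max (-M (k+1)) 0)
              * Real.exp (-max (-M (k+2)) 0) * Real.exp (-max (-M (k+3)) 0)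
              * Real.exp (-max (-M (k-1)) 0) * Real.exp (-max (-M (k+1)) 0)
              * Real.exp (-max (-M (k+2)) 0) * Real.exp (-max (-M (k+3)) 0)
              * Real.exp (-max (-M k) 0)) * (1 + q k) by ring]
          simp only [← Real.exp_add]
          congr 2
          ring
        have hl210 : lam^2 ≤ lam^10 := pow_le_pow_right₀ hlam.le (by norm_num)
        have hcoef : lam^2/4 * Real.exp (-(max (-M k) 0
              + 2*(max (-M (k-1)) 0 + max (-M (k+1)) 0 + max (-M (k+2)) 0 + max (-M (k+3)) 0)))
              * (1 + q k) ≤ lam^10/4 * Real.exp (-(max (-M k) 0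
              + 2*(max (-M (k-1)) 0 + max (-M (k+1)) 0 + max (-M (k+2)) 0 + max (-M (k+3)) 0)))
              * (1 + q k) := by
          apply mul_le_mul_of_nonneg_right _ (by linarith : (0:ℝ) ≤ 1 + q k)
          apply mul_le_mul_of_nonneg_right _ (Real.exp_nonneg _)
          linarith
        calc (r0*r2*r3*r4)^2 * r1^2 ≤ _ := hstep1
          _ = _ := hstep2
          _ ≤ _ := hcoef
      have hE1 : Real.exp (-(max (M k) 0
          + 2*(max (M (k-1)) 0 + max (M (k+1)) 0 + max (M (k+2)) 0 + max (M (k+3)) 0)))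
          ≤ Real.exp (-(2*DD)) := Real.exp_le_exp.2 (by linarith)
      have hE2 : Real.exp (-(max (-M k) 0
          + 2*(max (-M (k-1)) 0 + max (-M (k+1)) 0 + max (-M (k+2)) 0 + max (-M (k+3)) 0)))
          ≤ Real.exp (-(2*DD)) := Real.exp_le_exp.2 (by linarith)
      have hl104 : (0:ℝ) ≤ lam^10/4 := by positivity
      have hq1' : (0:ℝ) ≤ 1 + q k := by linarith
      have hTa' : (p4*p3*p2*p1*p0)^2 * q k ≤ lam^10/4 * Real.exp (-(2*DD)) * (1 + q k) :=
        hTa.trans (mul_le_mul_of_nonneg_right (mul_le_mul_of_nonneg_left hE1 hl104) hq1')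
      have hTb' : (r4*r3*r2*r1*r0)^2 ≤ lam^10/4 * Real.exp (-(2*DD)) * (1 + q k) :=
        hTb.trans (mul_le_mul_of_nonneg_right (mul_le_mul_of_nonneg_left hE2 hl104) hq1')
      have hfin : (0:ℝ) ≤ lam^10/2 * Real.exp (-(2*DD)) * (1 + q k) :=
        mul_nonneg (mul_nonneg (by positivity) (Real.exp_nonneg _)) hq1'
      linarith [hTa', hTb', hfin]
  -- assemble
  have hg2k : g2 k ≠ 0 := ((hgs k (by omega)).1).2
  have hx : g1 k ^ 2 = q k * g2 k ^ 2 := by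
    rw [hq k]
    exact (div_mul_cancel₀ _ (pow_ne_zero 2 hg2k)).symm
  have hy : (0:ℝ) ≤ g2 k ^ 2 := sq_nonneg _
  have hA2 : A^2 ≤ (lam-1)^10 * (p4*p3*p2*p1*p0)^2 := by
    calc A^2 ≤ ((lam - 1)^5 * (p4*p3*p2*p1*p0))^2 := pow_le_pow_left₀ hA0 hAle 2
      _ = (lam-1)^10 * (p4*p3*p2*p1*p0)^2 := by ring
  have hB2 : B^2 ≤ (lam-1)^10 * (r4*r3*r2*r1*r0)^2 := by
    calc B^2 ≤ ((lam - 1)^5 * (r4*r3*r2*r1*r0))^2 := pow_le_pow_left₀ hB0 hBle 2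
      _ = (lam-1)^10 * (r4*r3*r2*r1*r0)^2 := by ring
  have h8 : Real.exp (4*c1) = lam^8 := by
    rw [hc1, show (4:ℝ)*(2*Real.log lam) = ((8:ℕ):ℝ)*Real.log lam by push_cast; ring,
      Real.exp_nat_mul, Real.exp_log hl0]
  have hC2 : (lam * (lam-1)^5 * Real.exp (-DD + 2*c1))^2
      = (lam-1)^10 * (lam^10 * Real.exp (-(2*DD))) := by
    have he : Real.exp (-DD + 2*c1)^2 = Real.exp (-(2*DD)) * lam^8 := by
      rw [sq, ← Real.exp_add, show (-DD + 2*c1) + (-DD + 2*c1) = -(2*DD) + 4*c1 by ring,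
        Real.exp_add, h8]
    rw [mul_pow, mul_pow, he]
    ring
  have hCnn : 0 ≤ lam * (lam - 1)^5 * Real.exp (-DD + 2*c1) :=
    mul_nonneg (mul_nonneg hl0.le (pow_nonneg hl1.le 5)) (Real.exp_nonneg _)
  have hmain : g1 (k+5)^2 + g2 (k+5)^2 ≤
      (lam * (lam-1)^5 * Real.exp (-DD + 2*c1))^2 * (g1 k^2 + g2 k^2) := by
    rw [hgA2, hgB2, hC2]
    calc A^2 * g1 k^2 + B^2 * g2 k^2
        ≤ ((lam-1)^10 * (p4*p3*p2*p1*p0)^2) * g1 k^2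
          + ((lam-1)^10 * (r4*r3*r2*r1*r0)^2) * g2 k^2 :=
          add_le_add (mul_le_mul_of_nonneg_right hA2 (sq_nonneg _))
            (mul_le_mul_of_nonneg_right hB2 hy)
      _ = (lam-1)^10 * (((p4*p3*p2*p1*p0)^2 * q k + (r4*r3*r2*r1*r0)^2) * g2 k^2) := by
          rw [hx]; ring
      _ ≤ (lam-1)^10 * ((lam^10 * Real.exp (-(2*DD)) * (1 + q k)) * g2 k^2) :=
          mul_le_mul_of_nonneg_left (mul_le_mul_of_nonneg_right hKEY hy)
            (pow_nonneg hl1.le 10)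
      _ = (lam-1)^10 * (lam^10 * Real.exp (-(2*DD))) * (g1 k^2 + g2 k^2) := by
          rw [hx]; ring
  calc Real.sqrt (g1 (k+5)^2 + g2 (k+5)^2)
      ≤ Real.sqrt ((lam * (lam-1)^5 * Real.exp (-DD + 2*c1))^2 * (g1 k^2 + g2 k^2)) :=
        Real.sqrt_le_sqrt hmain
    _ = lam * (lam-1)^5 * Real.exp (-DD + 2*c1) * Real.sqrt (g1 k^2 + g2 k^2) := by
        rw [Real.sqrt_mul (sq_nonneg _), Real.sqrt_sq hCnn]
end

section
/- In the two-dimensional setting with γ_k ∈ (0,1) for all k ≥ 2, set M_k = log q_k, θ = (1 + √7 i)/2 ∈ ℂ, and ξ₂ = M₂ + (θ − 1)M₁. If |ξ₂| > 8 log λ, then the sequence {‖g_k‖} converges to zero R-superlinearly; in particular, lim_{k→∞} ‖g_k‖^{1/k} = 0, where ‖g_j‖ = √((g_j⁽¹⁾)² + (g_j⁽²⁾)²). -/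
open Filter Real


lemma fd_real (s2 s7 x y ρ : ℝ) (hs2 : s2^2 = 2) (hs20 : 0 ≤ s2)
    (hs7 : s7^2 = 7) (hs70 : 0 ≤ s7) (hρ0 : 0 ≤ ρ) (hρ2 : ρ^2 = x^2 + y^2) :
    ρ/5 ≤ y ∨ s2*ρ/5 ≤ s7/2*x + 1/2*y ∨ 2*ρ/5 ≤ s7/2*x - 3/2*y ∨
      2*s2*ρ/5 ≤ -(s7/2)*x - 5/2*y := by
  by_contra h
  push_neg at h
  obtain ⟨h0, h1, h2, h3⟩ := h
  have hs2b : s2 ≤ 1.415 := by nlinarith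
  have hs2a : 1.414 ≤ s2 := by nlinarith
  have hρpos : 0 < ρ := by
    rcases hρ0.eq_or_lt with hh | hh
    · exfalso
      have hy : y = 0 := by nlinarith
      rw [← hh] at h0; linarith
    · exact hh
  have hylb : -(3*s2/10*ρ) < y := by linarith
  have hxub : s7*x < 7/5*ρ := by linarith
  have hxlb : -((4*s2/5 + 1)*ρ) < s7*x := by linarith
  have hub : s7*x < (4*s2/5+1)*ρ := by
    have h5 : (4*s2/5 - 2/5)*ρ ≥ 0 := mul_nonneg (by linarith) hρ0
    linarith
  have hsq := sq_lt_sq' hxlb hub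
  have hx2 : 7*x^2 < (4*s2/5+1)^2 * ρ^2 := by
    calc 7*x^2 = (s7*x)^2 := by rw [mul_pow, hs7]
    _ < ((4*s2/5+1)*ρ)^2 := hsq
    _ = (4*s2/5+1)^2*ρ^2 := by ring
  have hyub : y < 3*s2/10*ρ := by
    have h5 : (3*s2/10 - 1/5)*ρ ≥ 0 := mul_nonneg (by linarith) hρ0
    linarith
  have hsqy := sq_lt_sq' hylb hyub
  have hy2 : y^2 < (9/50)*ρ^2 := by
    calc y^2 < (3*s2/10*ρ)^2 := hsqy
    _ = 9/100*s2^2*ρ^2 := by ring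
    _ = (9/50)*ρ^2 := by rw [hs2]; ring
  have hx2' : 7*x^2 < (57/25 + 8*s2/5)*ρ^2 := by
    have : (4*s2/5+1)^2*ρ^2 = (16/25*s2^2 + 8*s2/5 + 1)*ρ^2 := by ring
    rw [this, hs2] at hx2
    linarith
  have hsρ : s2*ρ^2 ≤ 1.415*ρ^2 := mul_le_mul_of_nonneg_right hs2b (sq_nonneg ρ)
  have hρρ : 0 < ρ^2 := by positivity
  nlinarith [hx2', hy2, hρ2, hsρ, hρρ]

lemma fd_complex (θ : ℂ) (hθ : θ = (1 + Real.sqrt 7 * Complex.I) / 2) (u : ℂ) :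
    ∃ d : ℕ, d ≤ 3 ∧ (Real.sqrt 2)^d * ‖u‖ / 5 ≤ (θ^d * u).im := by
  have h7 : ((Real.sqrt 7 : ℝ) : ℂ)^2 = 7 := by
    norm_cast
    exact Real.sq_sqrt (by norm_num)
  have hquad : θ^2 - θ + 2 = 0 := by
    rw [hθ]
    linear_combination (Complex.I^2/4) * h7 + (7/4 : ℂ) * Complex.I_sq
  have hθ2 : θ^2 = θ - 2 := by linear_combination hquad
  have hθ3 : θ^3 = -θ - 2 := by linear_combination (θ+1)*hquad
  have hre : θ.re = 1/2 := by rw [hθ]; simp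
  have him : θ.im = Real.sqrt 7 / 2 := by rw [hθ]; simp
  set x := u.re
  set y := u.im
  set ρ := ‖u‖ with hρdef
  have hρ0 : 0 ≤ ρ := norm_nonneg u
  have hρ2 : ρ^2 = x^2 + y^2 := by
    rw [hρdef, Complex.sq_norm, Complex.normSq_apply]; ring
  have hs2 : (Real.sqrt 2)^2 = 2 := Real.sq_sqrt (by norm_num)
  have hs20 : 0 ≤ Real.sqrt 2 := Real.sqrt_nonneg 2
  have hs7 : (Real.sqrt 7)^2 = 7 := Real.sq_sqrt (by norm_num)
  have hs70 : 0 ≤ Real.sqrt 7 := Real.sqrt_nonneg 7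
  rcases fd_real (Real.sqrt 2) (Real.sqrt 7) x y ρ hs2 hs20 hs7 hs70 hρ0 hρ2 with h | h | h | h
  · exact ⟨0, by norm_num, by simpa using h⟩
  · refine ⟨1, by norm_num, ?_⟩
    rw [pow_one, pow_one, Complex.mul_im, hre, him]
    linarith
  · refine ⟨2, by norm_num, ?_⟩
    rw [hθ2, Complex.mul_im, Complex.sub_re, Complex.sub_im, hre, him, hs2]
    simp only [Complex.re_ofNat, Complex.im_ofNat]
    linarith
  · refine ⟨3, by norm_num, ?_⟩
    have : (Real.sqrt 2)^3 = 2 * Real.sqrt 2 := by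
      rw [pow_succ, hs2]
    rw [hθ3, this, Complex.mul_im]
    simp only [Complex.sub_re, Complex.sub_im, Complex.neg_re, Complex.neg_im, hre, him,
      Complex.re_ofNat, Complex.im_ofNat]
    linarith


set_option maxHeartbeats 4000000 in
theorem stmt_16 (lam : ℝ) (hlam : 1 < lam)
    (γ : ℕ → ℝ) (hγ : ∀ k, 2 ≤ k → γ k ∈ Set.Ioo (0 : ℝ) 1)
    (g1 g2 : ℕ → ℝ)
    (hg11 : g1 1 ≠ 0) (hg21 : g2 1 ≠ 0) (hg12 : g1 2 ≠ 0) (hg22 : g2 2 ≠ 0)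
    (q : ℕ → ℝ) (hq : ∀ j, q j = (g1 j) ^ 2 / (g2 j) ^ 2)
    (α : ℕ → ℝ)
    (hα : ∀ k, 2 ≤ k → α k =
      γ k * (1 + q (k - 1)) / (lam + q (k - 1)) +
        (1 - γ k) * (lam + q (k - 1)) / (lam ^ 2 + q (k - 1)))
    (hup1 : ∀ k, 2 ≤ k → g1 (k + 1) = (1 - α k) * g1 k)
    (hup2 : ∀ k, 2 ≤ k → g2 (k + 1) = (1 - lam * α k) * g2 k)
    (M : ℕ → ℝ) (hM : ∀ j, M j = Real.log (q j))
    (θ : ℂ) (hθ : θ = (1 + Real.sqrt 7 * Complex.I) / 2)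
    (ξ2 : ℂ) (hξ2def : ξ2 = (M 2 : ℂ) + (θ - 1) * (M 1 : ℂ))
    (hξ2 : 8 * Real.log lam < ‖ξ2‖) :
    Filter.Tendsto
      (fun k : ℕ => (Real.sqrt ((g1 k) ^ 2 + (g2 k) ^ 2)) ^ ((1 : ℝ) / k))
      Filter.atTop (nhds 0) := by
  set L := Real.log lam with hLdef
  have hL : 0 < L := Real.log_pos hlam
  set s := Real.sqrt 2 with hsdef
  have hs2 : s^2 = 2 := Real.sq_sqrt (by norm_num)
  have hs0 : 0 ≤ s := Real.sqrt_nonneg 2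
  have hs1 : 1 < s := by nlinarith
  have hlam0 : 0 < lam := by linarith
  have hqpos : ∀ k, g1 k ≠ 0 → g2 k ≠ 0 → 0 < q k := by
    intro k h1 h2
    rw [hq k]
    exact div_pos (by positivity) (by positivity)
  have hq1 : 0 < q 1 := hqpos 1 hg11 hg21
  have main : ∀ k, 2 ≤ k → g1 k ≠ 0 → g2 k ≠ 0 → 0 < q (k-1) →
      (0 < 1 - α k ∧ 0 < lam * α k - 1 ∧
       1 - α k ≤ lam*(lam-1)*Real.exp (-(max (M (k-1)) 0)) ∧
       lam * α k - 1 ≤ (lam-1)*Real.exp (-(max (-(M (k-1))) 0)) ∧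
       (0 < M (k+1) - M k + 2*M (k-1) ∧ M (k+1) - M k + 2*M (k-1) < 2*L) ∧
       g1 (k+1) ≠ 0 ∧ g2 (k+1) ≠ 0) := by
    intro k hk h1 h2 hqq0
    obtain ⟨hγ0, hγ1⟩ := hγ k hk
    have hlam0 : 0 < lam := by linarith
    obtain ⟨qq, hqqdef⟩ : ∃ x, x = q (k-1) := ⟨_, rfl⟩
    rw [← hqqdef] at hqq0
    have hαk : α k = γ k * (1 + qq) / (lam + qq) + (1 - γ k) * (lam + qq) / (lam ^ 2 + qq) := by
      rw [hα k hk, ← hqqdef]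
    have hMkm : M (k-1) = Real.log qq := by rw [hM, ← hqqdef]
    have hd1 : 0 < lam + qq := by linarith
    have hd2 : 0 < lam^2 + qq := by nlinarith
    obtain ⟨D1, hD1def⟩ : ∃ x, x = γ k/(lam+qq) + (1-γ k)*lam/(lam^2+qq) := ⟨_, rfl⟩
    obtain ⟨D2, hD2def⟩ : ∃ x, x = γ k/(lam+qq) + (1-γ k)/(lam^2+qq) := ⟨_, rfl⟩
    have hD1pos : 0 < D1 := by
      rw [hD1def]
      apply add_pos (div_pos hγ0 hd1)
      exact div_pos (by nlinarith) hd2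
    have hD2pos : 0 < D2 := by
      rw [hD2def]
      apply add_pos (div_pos hγ0 hd1)
      exact div_pos (by linarith) hd2
    have hA : 1 - α k = (lam-1)*D1 := by
      rw [hαk, hD1def]
      field_simp
      ring
    have hB : lam * α k - 1 = qq*((lam-1)*D2) := by
      rw [hαk, hD2def]
      field_simp
      ring
    have hlam1 : (0:ℝ) < lam - 1 := by linarith
    have hApos : 0 < 1 - α k := by rw [hA]; positivity
    have hBpos : 0 < lam * α k - 1 := by rw [hB]; positivity
    have hD1ub : D1 ≤ lam/(lam+qq) := by
      have key : lam/(lam+qq) - D1 = (lam-1)*(lam^2 + γ k*qq)/((lam+qq)*(lam^2+qq)) := by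
        rw [hD1def]; field_simp; ring
      have h0 : 0 ≤ (lam-1)*(lam^2 + γ k*qq)/((lam+qq)*(lam^2+qq)) := by
        apply div_nonneg _ (by positivity)
        apply mul_nonneg (by linarith) (by nlinarith)
      linarith
    have hD2ub : D2 ≤ 1/(lam+qq) := by
      have key : 1/(lam+qq) - D2 = (1-γ k)*(lam^2-lam)/((lam+qq)*(lam^2+qq)) := by
        rw [hD2def]; field_simp; ring
      have h0 : 0 ≤ (1-γ k)*(lam^2-lam)/((lam+qq)*(lam^2+qq)) := by
        apply div_nonneg _ (by positivity)
        apply mul_nonneg (by linarith) (by nlinarith)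
      linarith
    have hD12 : D2 < D1 := by
      have key : D1 - D2 = (1-γ k)*(lam-1)/(lam^2+qq) := by
        rw [hD1def, hD2def]; field_simp; ring
      have h0 : 0 < (1-γ k)*(lam-1)/(lam^2+qq) :=
        div_pos (mul_pos (by linarith) (by linarith)) hd2
      linarith
    have hD1lam : D1 < lam*D2 := by
      have key : lam*D2 - D1 = γ k*(lam-1)/(lam+qq) := by
        rw [hD1def, hD2def]; field_simp; ring
      have h0 : 0 < γ k*(lam-1)/(lam+qq) := div_pos (mul_pos hγ0 (by linarith)) hd1
      linarith
    have bound3 : 1 - α k ≤ lam*(lam-1)*Real.exp (-(max (M (k-1)) 0)) := by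
      rw [hA, hMkm]
      rcases le_or_gt 1 qq with hcase | hcase
      · have hmax : max (Real.log qq) 0 = Real.log qq := max_eq_left (Real.log_nonneg hcase)
        rw [hmax, ← Real.log_inv, Real.exp_log (by positivity)]
        have hstep : D1 ≤ lam * qq⁻¹ := by
          calc D1 ≤ lam/(lam+qq) := hD1ub
          _ ≤ lam/qq := by
              apply div_le_div_of_nonneg_left (by linarith) (by linarith) (by linarith)
          _ = lam * qq⁻¹ := by ring
        calc (lam-1)*D1 ≤ (lam-1)*(lam*qq⁻¹) := by
              apply mul_le_mul_of_nonneg_left hstep (by linarith)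
        _ = lam*(lam-1)*qq⁻¹ := by ring
      · have hmax : max (Real.log qq) 0 = 0 := max_eq_right (le_of_lt (Real.log_neg hqq0 hcase))
        rw [hmax]
        simp only [neg_zero, Real.exp_zero, mul_one]
        have hstep : D1 ≤ 1 := by
          calc D1 ≤ lam/(lam+qq) := hD1ub
          _ ≤ 1 := by rw [div_le_one hd1]; linarith
        have h5 : (lam-1)*D1 ≤ (lam-1)*1 := mul_le_mul_of_nonneg_left hstep (by linarith)
        have h6 : lam - 1 ≤ lam*(lam-1) := le_mul_of_one_le_left (by linarith) (by linarith)
        linarith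
    have bound4 : lam * α k - 1 ≤ (lam-1)*Real.exp (-(max (-(M (k-1))) 0)) := by
      rw [hB, hMkm]
      rcases le_or_gt 1 qq with hcase | hcase
      · have hmax : max (-Real.log qq) 0 = 0 := by
          apply max_eq_right
          simp only [neg_nonpos]
          exact Real.log_nonneg hcase
        rw [hmax]
        simp only [neg_zero, Real.exp_zero, mul_one]
        have hstep : qq * D2 ≤ 1 := by
          calc qq * D2 ≤ qq * (1/(lam+qq)) := by
                apply mul_le_mul_of_nonneg_left hD2ub (by linarith)
          _ = qq/(lam+qq) := by ring
          _ ≤ 1 := by rw [div_le_one hd1]; linarith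
        have h5 : qq*((lam-1)*D2) = (lam-1)*(qq*D2) := by ring
        have h6 : (lam-1)*(qq*D2) ≤ (lam-1)*1 := mul_le_mul_of_nonneg_left hstep (by linarith)
        linarith
      · have hmax : max (-Real.log qq) 0 = -Real.log qq := by
          apply max_eq_left
          simp only [neg_nonneg]
          exact le_of_lt (Real.log_neg hqq0 hcase)
        rw [hmax, neg_neg, Real.exp_log hqq0]
        have hstep : D2 ≤ 1 := by
          calc D2 ≤ 1/(lam+qq) := hD2ub
          _ ≤ 1 := by rw [div_le_one hd1]; linarith
        have h5 : qq*((lam-1)*D2) ≤ qq*((lam-1)*1) :=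
          mul_le_mul_of_nonneg_left (mul_le_mul_of_nonneg_left hstep (by linarith)) (by linarith)
        have h6 : qq*((lam-1)*1) = (lam-1)*qq := by ring
        linarith
    have hBne : (1 - lam * α k) ≠ 0 := by
      intro hcontra; rw [sub_eq_zero] at hcontra; nlinarith
    have hg1k1 : g1 (k+1) ≠ 0 := by
      rw [hup1 k hk]; exact mul_ne_zero (by linarith) h1
    have hg2k1 : g2 (k+1) ≠ 0 := by
      rw [hup2 k hk]; exact mul_ne_zero hBne h2
    have hqk : 0 < q k := hqpos k h1 h2
    have hqkne : q k ≠ 0 := ne_of_gt hqk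
    have hqk1 : q (k+1) = (1-α k)^2 * q k / (lam*α k - 1)^2 := by
      rw [hq (k+1), hup1 k hk, hup2 k hk, hq k]
      have hBne' : lam*α k - 1 ≠ 0 := ne_of_gt hBpos
      field_simp
      ring
    have hMk1 : M (k+1) = 2*Real.log (1-α k) - 2*Real.log (lam*α k - 1) + M k := by
      rw [hM (k+1), hqk1, hM k]
      rw [Real.log_div (by positivity) (by positivity),
          Real.log_mul (by positivity) hqkne, Real.log_pow, Real.log_pow]
      push_cast; ring
    have hlogA : Real.log (1 - α k) = Real.log (lam-1) + Real.log D1 := by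
      rw [hA, Real.log_mul (ne_of_gt hlam1) (ne_of_gt hD1pos)]
    have hlogB : Real.log (lam*α k - 1) = Real.log qq + (Real.log (lam-1) + Real.log D2) := by
      rw [hB, Real.log_mul (ne_of_gt hqq0) (by positivity),
          Real.log_mul (ne_of_gt hlam1) (ne_of_gt hD2pos)]
    have hEeq : M (k+1) - M k + 2*M (k-1) = 2*(Real.log D1 - Real.log D2) := by
      rw [hMk1, hlogA, hlogB, hMkm]; ring
    have hEpos : 0 < M (k+1) - M k + 2*M (k-1) := by
      rw [hEeq]
      have := Real.log_lt_log hD2pos hD12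
      linarith
    have hEub : M (k+1) - M k + 2*M (k-1) < 2*L := by
      rw [hEeq, hLdef]
      have h1' := Real.log_lt_log hD1pos hD1lam
      rw [Real.log_mul (by positivity) (ne_of_gt hD2pos)] at h1'
      linarith
    exact ⟨hApos, hBpos, bound3, bound4, ⟨hEpos, hEub⟩, hg1k1, hg2k1⟩
  have nz : ∀ k, 2 ≤ k → (g1 k ≠ 0 ∧ g2 k ≠ 0 ∧ 0 < q (k-1)) := by
    intro k hk
    induction k, hk using Nat.le_induction with
    | base => exact ⟨hg12, hg22, by simpa using hq1⟩
    | succ k hk ih =>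
      obtain ⟨h1, h2, hqk⟩ := ih
      obtain ⟨-, -, -, -, -, h1', h2'⟩ := main k hk h1 h2 hqk
      exact ⟨h1', h2', by simpa using hqpos k h1 h2⟩
  set E : ℕ → ℝ := fun k => M (k+1) - M k + 2*M (k-1) with hEdef
  have hE : ∀ k, 2 ≤ k → 0 < E k ∧ E k < 2*L := by
    intro k hk
    obtain ⟨h1, h2, hqk⟩ := nz k hk
    exact (main k hk h1 h2 hqk).2.2.2.2.1
  set ξ : ℕ → ℂ := fun k => (M k : ℂ) + (θ - 1) * (M (k-1) : ℂ) with hξdef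
  have hquad : θ^2 - θ + 2 = 0 := by
    have h7 : ((Real.sqrt 7 : ℝ) : ℂ)^2 = 7 := by
      norm_cast; exact Real.sq_sqrt (by norm_num)
    rw [hθ]
    linear_combination (Complex.I^2/4) * h7 + (7/4 : ℂ) * Complex.I_sq
  have hxirec : ∀ k, 1 ≤ k → ξ (k+1) = θ * ξ k + (E k : ℂ) := by
    intro k hk
    have h1 : (k+1) - 1 = k := by omega
    simp only [hξdef, hEdef, h1]
    push_cast
    linear_combination (-(M (k-1) : ℂ)) * hquad
  have habsθ : ‖θ‖ = s := by
    have hre : θ.re = 1/2 := by rw [hθ]; simp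
    have him0 : θ.im = Real.sqrt 7/2 := by rw [hθ]; simp
    rw [Complex.norm_def, Complex.normSq_apply, hre, him0, hsdef]
    have h77 : Real.sqrt 7 * Real.sqrt 7 = 7 := Real.mul_self_sqrt (by norm_num)
    congr 1
    linear_combination h77/4
  have habsE : ∀ k, 2 ≤ k → ‖(E k : ℂ)‖ ≤ 2*L := by
    intro k hk
    rw [Complex.norm_real, Real.norm_eq_abs, abs_of_pos (hE k hk).1]
    exact le_of_lt (hE k hk).2
  set cstar := 2*(s+1)*L with hcstardef
  have hξ22 : ξ 2 = ξ2 := by rw [hξdef, hξ2def]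
  set δ := ‖ξ 2‖ - cstar with hδdef
  have hδ : 0 < δ := by
    have h1 : cstar ≤ 5*L := by rw [hcstardef]; nlinarith
    rw [hδdef, hξ22]
    linarith
  clear_value L s E ξ cstar δ
  have hgrow : ∀ k, 2 ≤ k → δ * s^(k-2) + cstar ≤ ‖ξ k‖ := by
    intro k hk
    induction k, hk using Nat.le_induction with
    | base => simp [hδdef]
    | succ k hk ih =>
      have hrec := hxirec k (by omega)
      have h1 : ‖θ * ξ k‖ = s * ‖ξ k‖ := by
        rw [norm_mul, habsθ]
      have h2 := habsE k hk
      have h3 : ‖θ * ξ k‖ ≤ ‖ξ (k+1)‖ + ‖(E k : ℂ)‖ := by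
        have e : θ * ξ k = ξ (k+1) - (E k : ℂ) := by rw [hrec]; ring
        rw [e]
        simpa [sub_eq_add_neg] using norm_add_le (ξ (k+1)) (-(E k : ℂ))
      have h4 : s * (δ*s^(k-2) + cstar) ≤ s * ‖ξ k‖ :=
        mul_le_mul_of_nonneg_left ih hs0
      have h5 : s^(k+1-2) = s^(k-2)*s := by
        rw [show k+1-2 = (k-2)+1 from by omega, pow_succ]
      have h6 : s*cstar - 2*L = cstar := by
        rw [hcstardef]; linear_combination 2*L*hs2
      have : δ*s^(k+1-2) + cstar = s*(δ*s^(k-2) + cstar) - 2*L := by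
        rw [h5]; linear_combination (-1 : ℝ) * h6
      rw [this]
      linarith
  have hwin : ∀ j, 2 ≤ j → ∀ d, d ≤ 3 →
      ‖ξ (j+d) - θ^d * ξ j‖ ≤ 2*L*(3+s) := by
    intro j hj d hd
    have r1 := hxirec j (by omega)
    have r2 := hxirec (j+1) (by omega)
    have r3 := hxirec (j+2) (by omega)
    have hEj := habsE j hj
    have hEj1 := habsE (j+1) (by omega)
    have hEj2 := habsE (j+2) (by omega)
    have hRHS : 0 ≤ 2*L*(3+s) := by positivity
    interval_cases d
    · simp only [Nat.add_zero, pow_zero, one_mul, sub_self, norm_zero]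
      exact hRHS
    · have e : ξ (j+1) - θ^1 * ξ j = (E j : ℂ) := by
        rw [r1]; ring
      rw [e]
      calc ‖(E j : ℂ)‖ ≤ 2*L := hEj
      _ ≤ 2*L*(3+s) := by nlinarith
    · have e : ξ (j+2) - θ^2 * ξ j = θ*(E j : ℂ) + (E (j+1) : ℂ) := by
        rw [show j+2 = (j+1)+1 from rfl, r2, r1]; ring
      rw [e]
      calc ‖θ*(E j : ℂ) + (E (j+1) : ℂ)‖
          ≤ ‖θ*(E j : ℂ)‖ + ‖(E (j+1) : ℂ)‖ :=
            norm_add_le _ _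
      _ = s * ‖(E j : ℂ)‖ + ‖(E (j+1) : ℂ)‖ := by
            rw [norm_mul, habsθ]
      _ ≤ s * (2*L) + 2*L := by
            have := mul_le_mul_of_nonneg_left hEj hs0
            linarith
      _ ≤ 2*L*(3+s) := by nlinarith
    · have e : ξ (j+3) - θ^3 * ξ j = θ^2*(E j : ℂ) + θ*(E (j+1) : ℂ) + (E (j+2) : ℂ) := by
        rw [show j+3 = (j+2)+1 from rfl, r3, show j+2 = (j+1)+1 from rfl, r2, r1]; ring
      rw [e]
      have habsθ2 : ‖θ^2‖ = 2 := by
        rw [norm_pow, habsθ, hs2]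
      calc ‖θ^2*(E j : ℂ) + θ*(E (j+1) : ℂ) + (E (j+2) : ℂ)‖
          ≤ ‖θ^2*(E j : ℂ) + θ*(E (j+1) : ℂ)‖ + ‖(E (j+2) : ℂ)‖ :=
            norm_add_le _ _
      _ ≤ ‖θ^2*(E j : ℂ)‖ + ‖θ*(E (j+1) : ℂ)‖
            + ‖(E (j+2) : ℂ)‖ := by
            linarith [norm_add_le (θ^2*(E j : ℂ)) (θ*(E (j+1) : ℂ))]
      _ = 2 * ‖(E j : ℂ)‖ + s * ‖(E (j+1) : ℂ)‖
            + ‖(E (j+2) : ℂ)‖ := by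
            rw [norm_mul, norm_mul, habsθ, habsθ2]
      _ ≤ 2*(2*L) + s*(2*L) + 2*L := by
            have := mul_le_mul_of_nonneg_left hEj1 hs0
            linarith
      _ = 2*L*(3+s) := by ring
  have him : θ.im = Real.sqrt 7 / 2 := by rw [hθ]; simp
  have himξ : ∀ i, (ξ i).im = Real.sqrt 7 / 2 * M (i-1) := by
    intro i
    rw [hξdef]
    simp [Complex.add_im, Complex.mul_im, Complex.sub_im, Complex.sub_re, him]
  have hs70 : (0:ℝ) < Real.sqrt 7 := Real.sqrt_pos.mpr (by norm_num)
  have hcstar0 : 0 ≤ cstar := by rw [hcstardef]; positivity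
  have hplus : ∀ j, 2 ≤ j → ∃ i, j - 1 ≤ i ∧ i ≤ j + 2 ∧
      2/Real.sqrt 7 * (δ*s^(j-2)/5 - 2*L*(3+s)) ≤ M i := by
    intro j hj
    obtain ⟨d, hd3, hdir⟩ := fd_complex θ hθ (ξ j)
    rw [← hsdef] at hdir
    refine ⟨j + d - 1, by omega, by omega, ?_⟩
    have hρ0 : 0 ≤ ‖ξ j‖ := norm_nonneg _
    have hsd : (1:ℝ) ≤ s^d := one_le_pow₀ (le_of_lt hs1)
    have hgj := hgrow j hj
    have hw := hwin j hj d hd3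
    have h3 : (θ^d * ξ j).im - (ξ (j+d)).im ≤ 2*L*(3+s) := by
      have h4 := Complex.abs_im_le_norm (ξ (j+d) - θ^d * ξ j)
      rw [Complex.sub_im] at h4
      have := neg_abs_le ((ξ (j+d)).im - (θ^d * ξ j).im)
      linarith [abs_le.mp h4]
    have h5 : δ*s^(j-2)/5 ≤ (θ^d * ξ j).im := by
      have t1 : s^d * ‖ξ j‖ / 5 ≥ 1 * ‖ξ j‖ / 5 := by
        have := mul_le_mul_of_nonneg_right hsd hρ0
        linarith
      have t2 : ‖ξ j‖ ≥ δ*s^(j-2) := by linarith [hgj]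
      have := hdir
      linarith
    have h6 : δ*s^(j-2)/5 - 2*L*(3+s) ≤ (ξ (j+d)).im := by linarith
    have h7 : (ξ (j+d)).im = Real.sqrt 7 / 2 * M (j+d-1) := by
      rw [himξ (j+d)]
    rw [h7] at h6
    have h8 : 2/Real.sqrt 7 * (δ*s^(j-2)/5 - 2*L*(3+s)) ≤
        2/Real.sqrt 7 * (Real.sqrt 7 / 2 * M (j+d-1)) :=
      mul_le_mul_of_nonneg_left h6 (by positivity)
    have h9 : 2/Real.sqrt 7 * (Real.sqrt 7 / 2 * M (j+d-1)) = M (j+d-1) := by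
      field_simp
    rw [h9] at h8
    exact h8
  have hminus : ∀ j, 2 ≤ j → ∃ i, j - 1 ≤ i ∧ i ≤ j + 2 ∧
      M i ≤ -(2/Real.sqrt 7 * (δ*s^(j-2)/5 - 2*L*(3+s))) := by
    intro j hj
    obtain ⟨d, hd3, hdir⟩ := fd_complex θ hθ (-(ξ j))
    rw [← hsdef] at hdir
    refine ⟨j + d - 1, by omega, by omega, ?_⟩
    have hρ0 : 0 ≤ ‖ξ j‖ := norm_nonneg _
    have habsneg : ‖-(ξ j)‖ = ‖ξ j‖ := by simp
    rw [habsneg, mul_neg, Complex.neg_im] at hdir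
    have hdir' : (θ^d * ξ j).im ≤ -(s^d * ‖ξ j‖/5) := by
      linarith
    have hsd : (1:ℝ) ≤ s^d := one_le_pow₀ (le_of_lt hs1)
    have hgj := hgrow j hj
    have hw := hwin j hj d hd3
    have h3 : (ξ (j+d)).im - (θ^d * ξ j).im ≤ 2*L*(3+s) := by
      have h4 := Complex.abs_im_le_norm (ξ (j+d) - θ^d * ξ j)
      rw [Complex.sub_im] at h4
      linarith [abs_le.mp h4]
    have h5 : (θ^d * ξ j).im ≤ -(δ*s^(j-2)/5) := by
      have t1 : s^d * ‖ξ j‖ / 5 ≥ 1 * ‖ξ j‖ / 5 := by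
        have := mul_le_mul_of_nonneg_right hsd hρ0
        linarith
      have t2 : ‖ξ j‖ ≥ δ*s^(j-2) := by linarith [hgj]
      linarith
    have h6 : Real.sqrt 7 / 2 * M (j+d-1) ≤ -(δ*s^(j-2)/5) + 2*L*(3+s) := by
      rw [← himξ (j+d)]
      linarith
    have h8 : 2/Real.sqrt 7 * (Real.sqrt 7/2 * M (j+d-1)) ≤
        2/Real.sqrt 7 * (-(δ*s^(j-2)/5) + 2*L*(3+s)) :=
      mul_le_mul_of_nonneg_left h6 (by positivity)
    have h9 : 2/Real.sqrt 7 * (Real.sqrt 7 / 2 * M (j+d-1)) = M (j+d-1) := by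
      field_simp
    rw [h9] at h8
    calc M (j+d-1) ≤ 2/Real.sqrt 7 * (-(δ*s^(j-2)/5) + 2*L*(3+s)) := h8
    _ = -(2/Real.sqrt 7 * (δ*s^(j-2)/5 - 2*L*(3+s))) := by ring
  have mainA : ∀ k, 2 ≤ k → 0 < 1 - α k ∧
      1 - α k ≤ lam*(lam-1)*Real.exp (-(max (M (k-1)) 0)) := by
    intro k hk
    obtain ⟨h1, h2, hqk⟩ := nz k hk
    obtain ⟨a, -, c, -, -, -, -⟩ := main k hk h1 h2 hqk
    exact ⟨a, c⟩
  have mainB : ∀ k, 2 ≤ k → 0 < lam * α k - 1 ∧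
      lam * α k - 1 ≤ (lam-1)*Real.exp (-(max (-(M (k-1))) 0)) := by
    intro k hk
    obtain ⟨h1, h2, hqk⟩ := nz k hk
    obtain ⟨-, b, -, d, -, -, -⟩ := main k hk h1 h2 hqk
    exact ⟨b, d⟩
  clear main nz hE hxirec
  set Spl : ℕ → ℝ := fun k => ∑ i ∈ Finset.Icc 1 (k-2), max (M i) 0 with hSpldef
  set Smn : ℕ → ℝ := fun k => ∑ i ∈ Finset.Icc 1 (k-2), max (-(M i)) 0 with hSmndef
  set W : ℕ → ℝ := fun k => 2/Real.sqrt 7 * (δ*s^(k-6)/5 - 2*L*(3+s)) with hWdef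
  have hSpl : ∀ k, 6 ≤ k → W k ≤ Spl k := by
    intro k hk
    obtain ⟨i, hi1, hi2, hMi⟩ := hplus (k-4) (by omega)
    have hmem : i ∈ Finset.Icc 1 (k-2) := Finset.mem_Icc.mpr ⟨by omega, by omega⟩
    have hstep : max (M i) 0 ≤ Spl k := by
      apply Finset.single_le_sum (fun j _ => le_max_right (M j) 0) hmem
    have hexp : (k-4)-2 = k-6 := by omega
    rw [hexp] at hMi
    have h1 : W k ≤ M i := by simp only [hWdef]; exact hMi
    calc W k ≤ M i := h1
    _ ≤ max (M i) 0 := le_max_left _ _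
    _ ≤ Spl k := hstep
  have hSmn : ∀ k, 6 ≤ k → W k ≤ Smn k := by
    intro k hk
    obtain ⟨i, hi1, hi2, hMi⟩ := hminus (k-4) (by omega)
    have hmem : i ∈ Finset.Icc 1 (k-2) := Finset.mem_Icc.mpr ⟨by omega, by omega⟩
    have hstep : max (-(M i)) 0 ≤ Smn k := by
      apply Finset.single_le_sum (fun j _ => le_max_right (-(M j)) 0) hmem
    have hexp : (k-4)-2 = k-6 := by omega
    rw [hexp] at hMi
    have h1 : W k ≤ -(M i) := by simp only [hWdef]; linarith
    calc W k ≤ -(M i) := h1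
    _ ≤ max (-(M i)) 0 := le_max_left _ _
    _ ≤ Smn k := hstep
  have hg1bd : ∀ k, 2 ≤ k → |g1 k| ≤ (lam*(lam-1))^(k-2) * Real.exp (-(Spl k)) * |g1 2| := by
    intro k hk
    induction k, hk using Nat.le_induction with
    | base =>
      have : Finset.Icc 1 (2-2) = ∅ := by decide
      simp [hSpldef, this]
    | succ k hk ih =>
      obtain ⟨hApos, hAbd⟩ := mainA k hk
      have habs : |g1 (k+1)| = (1-α k)*|g1 k| := by
        rw [hup1 k hk, abs_mul, abs_of_pos hApos]
      have hSplsucc : Spl (k+1) = Spl k + max (M (k-1)) 0 := by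
        simp only [hSpldef]
        rw [show k+1-2 = (k-2)+1 from by omega,
            Finset.sum_Icc_succ_top (by omega : 1 ≤ (k-2)+1),
            show (k-2)+1 = k-1 from by omega]
      calc |g1 (k+1)| = (1-α k)*|g1 k| := habs
      _ ≤ (lam*(lam-1)*Real.exp (-(max (M (k-1)) 0))) *
            ((lam*(lam-1))^(k-2) * Real.exp (-(Spl k)) * |g1 2|) := by
          apply mul_le_mul hAbd ih (abs_nonneg _)
          have : (0:ℝ) < lam - 1 := by linarith
          positivity
      _ = (lam*(lam-1))^(k+1-2) * Real.exp (-(Spl (k+1))) * |g1 2| := by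
          rw [hSplsucc, show k+1-2 = (k-2)+1 from by omega, pow_succ, neg_add, Real.exp_add]
          ring
  have hg2bd : ∀ k, 2 ≤ k → |g2 k| ≤ (lam-1)^(k-2) * Real.exp (-(Smn k)) * |g2 2| := by
    intro k hk
    induction k, hk using Nat.le_induction with
    | base =>
      have : Finset.Icc 1 (2-2) = ∅ := by decide
      simp [hSmndef, this]
    | succ k hk ih =>
      obtain ⟨hBpos, hBbd⟩ := mainB k hk
      have habs : |g2 (k+1)| = (lam * α k - 1)*|g2 k| := by
        rw [hup2 k hk, abs_mul, abs_sub_comm, abs_of_pos hBpos]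
      have hSmnsucc : Smn (k+1) = Smn k + max (-(M (k-1))) 0 := by
        simp only [hSmndef]
        rw [show k+1-2 = (k-2)+1 from by omega,
            Finset.sum_Icc_succ_top (by omega : 1 ≤ (k-2)+1),
            show (k-2)+1 = k-1 from by omega]
      calc |g2 (k+1)| = (lam * α k - 1)*|g2 k| := habs
      _ ≤ ((lam-1)*Real.exp (-(max (-(M (k-1))) 0))) *
            ((lam-1)^(k-2) * Real.exp (-(Smn k)) * |g2 2|) := by
          apply mul_le_mul hBbd ih (abs_nonneg _)
          have : (0:ℝ) < lam - 1 := by linarith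
          positivity
      _ = (lam-1)^(k+1-2) * Real.exp (-(Smn (k+1))) * |g2 2| := by
          rw [hSmnsucc, show k+1-2 = (k-2)+1 from by omega, pow_succ, neg_add, Real.exp_add]
          ring
  -- uniform constants
  set P : ℝ := max (lam*(lam-1)) 1 with hPdef
  have hP1 : (1:ℝ) ≤ P := le_max_right _ _
  have hP0 : (0:ℝ) < P := by linarith
  have hPa : lam*(lam-1) ≤ P := le_max_left _ _
  have hPb : lam - 1 ≤ P := by
    have h1 : lam - 1 ≤ lam*(lam-1) := le_mul_of_one_le_left (by linarith) (by linarith)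
    linarith
  set G : ℝ := |g1 2| + |g2 2| with hGdef
  have hG0 : (0:ℝ) < G := by
    have := abs_pos.mpr hg12
    have := abs_nonneg (g2 2)
    rw [hGdef]; linarith
  have hbd : ∀ k, 6 ≤ k → Real.sqrt (g1 k^2 + g2 k^2) ≤
      Real.exp (Real.log (2*G) + k*Real.log P - W k) := by
    intro k hk6
    have hk2 : 2 ≤ k := by omega
    have hlam1 : (0:ℝ) < lam - 1 := by linarith
    have hbase : ∀ (b : ℝ), 0 ≤ b → b ≤ P → b^(k-2) ≤ P^k := fun b hb hbP =>
      le_trans (pow_le_pow_left₀ hb hbP (k-2)) (pow_le_pow_right₀ hP1 (by omega))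
    have e1 : |g1 k| ≤ P^k * Real.exp (-(W k)) * G := by
      calc |g1 k| ≤ (lam*(lam-1))^(k-2) * Real.exp (-(Spl k)) * |g1 2| := hg1bd k hk2
      _ ≤ P^k * Real.exp (-(W k)) * G := by
          apply mul_le_mul _ _ (abs_nonneg _) (by positivity)
          · apply mul_le_mul (hbase _ (by positivity) hPa) _ (Real.exp_nonneg _) (by positivity)
            exact Real.exp_le_exp.mpr (neg_le_neg (hSpl k hk6))
          · rw [hGdef]; linarith [abs_nonneg (g2 2)]
    have e2 : |g2 k| ≤ P^k * Real.exp (-(W k)) * G := by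
      calc |g2 k| ≤ (lam-1)^(k-2) * Real.exp (-(Smn k)) * |g2 2| := hg2bd k hk2
      _ ≤ P^k * Real.exp (-(W k)) * G := by
          apply mul_le_mul _ _ (abs_nonneg _) (by positivity)
          · apply mul_le_mul (hbase _ (by linarith) hPb) _ (Real.exp_nonneg _) (by positivity)
            exact Real.exp_le_exp.mpr (neg_le_neg (hSmn k hk6))
          · rw [hGdef]; linarith [abs_nonneg (g1 2)]
    have hsqrt : Real.sqrt (g1 k^2 + g2 k^2) ≤ |g1 k| + |g2 k| := by
      have h' : g1 k^2 + g2 k^2 ≤ (|g1 k| + |g2 k|)^2 := by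
        have e1' : |g1 k|^2 = g1 k^2 := sq_abs _
        have e2' : |g2 k|^2 = g2 k^2 := sq_abs _
        nlinarith [abs_nonneg (g1 k), abs_nonneg (g2 k)]
      calc Real.sqrt (g1 k^2 + g2 k^2) ≤ Real.sqrt ((|g1 k| + |g2 k|)^2) :=
            Real.sqrt_le_sqrt h'
      _ = |g1 k| + |g2 k| := Real.sqrt_sq (by positivity)
    have hPk : P^k = Real.exp (k * Real.log P) := by
      rw [Real.exp_nat_mul, Real.exp_log hP0]
    calc Real.sqrt (g1 k^2 + g2 k^2) ≤ |g1 k| + |g2 k| := hsqrt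
    _ ≤ 2*G*(P^k * Real.exp (-(W k))) := by linarith
    _ = Real.exp (Real.log (2*G) + k*Real.log P - W k) := by
        rw [hPk, show Real.log (2*G) + k*Real.log P - W k
            = Real.log (2*G) + (k*Real.log P + -(W k)) from by ring,
          Real.exp_add, Real.exp_add, Real.exp_log (by linarith)]
  -- the limit
  have hs20 : (0:ℝ) < s := by linarith
  set c1 : ℝ := 2/Real.sqrt 7 * δ/5 / s^6 with hc1def
  have hs70 : (0:ℝ) < Real.sqrt 7 := Real.sqrt_pos.mpr (by norm_num)
  have hc1 : 0 < c1 := by rw [hc1def]; positivity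
  set c2 : ℝ := 2/Real.sqrt 7 * (2*L*(3+s)) with hc2def
  have hWeq : ∀ k, 6 ≤ k → W k = c1*s^k - c2 := by
    intro k hk
    have hpow : s^(k-6)*s^6 = s^k := by
      rw [← pow_add]; congr 1; omega
    have hs6 : (0:ℝ) ≠ s^6 := by positivity
    have e3 : c1*s^k = 2/Real.sqrt 7*(δ*s^(k-6)/5) := by
      rw [hc1def, ← hpow]
      field_simp
    simp only [hWdef]
    rw [e3]
    ring
  -- divergence of s^k/k
  have hT0 : Tendsto (fun k : ℕ => s^k/(k:ℝ)) atTop atTop := by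
    have hc : 0 < Real.log s := Real.log_pos hs1
    have A : Tendsto (fun k : ℕ => (k:ℝ)*Real.log s) atTop atTop :=
      (tendsto_natCast_atTop_atTop (R := ℝ)).atTop_mul_const hc
    have B : Tendsto (fun x : ℝ => Real.exp x/x^1) atTop atTop :=
      Real.tendsto_exp_div_pow_atTop 1
    have C := (B.comp A).atTop_mul_const hc
    apply C.congr'
    filter_upwards [eventually_ge_atTop 1] with k hk
    have hkR : (0:ℝ) < (k:ℝ) := by exact_mod_cast Nat.pos_of_ne_zero (by omega)
    have hconv : Real.exp ((k:ℝ)*Real.log s) = s^k := by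
      rw [Real.exp_nat_mul, Real.exp_log hs20]
    simp only [Function.comp]
    rw [pow_one, hconv]
    field_simp
  have hφ : Tendsto (fun k : ℕ => (Real.log (2*G) + k*Real.log P - W k)/k) atTop atBot := by
    have key : (fun k : ℕ => (Real.log (2*G) + k*Real.log P - W k)/k) =ᶠ[atTop]
        (fun k : ℕ => ((Real.log (2*G) + c2)/k + Real.log P) + (s^k/(k:ℝ))*(-c1)) := by
      filter_upwards [eventually_ge_atTop 6] with k hk
      have hkR : ((k:ℝ)) ≠ 0 := by
        have : (0:ℝ) < (k:ℝ) := by exact_mod_cast Nat.pos_of_ne_zero (by omega)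
        linarith
      rw [hWeq k hk]
      field_simp
      ring
    apply Tendsto.congr' key.symm
    have hg : Tendsto (fun k : ℕ => (s^k/(k:ℝ))*(-c1)) atTop atBot :=
      hT0.atTop_mul_const_of_neg (by linarith)
    have hf : ∀ᶠ k : ℕ in atTop,
        (Real.log (2*G) + c2)/k + Real.log P ≤ |Real.log (2*G) + c2| + Real.log P := by
      filter_upwards [eventually_ge_atTop 1] with k hk
      have hk1 : (1:ℝ) ≤ (k:ℝ) := by exact_mod_cast hk
      have hk0 : (0:ℝ) < (k:ℝ) := by linarith
      have h2 : (Real.log (2*G) + c2)/k ≤ |Real.log (2*G) + c2|/k := by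
        gcongr
        exact le_abs_self _
      have h3 : |Real.log (2*G) + c2|/k ≤ |Real.log (2*G) + c2| :=
        div_le_self (abs_nonneg _) hk1
      linarith
    exact tendsto_atBot_add_left_of_ge' _ (|Real.log (2*G) + c2| + Real.log P) hf hg
  have hexp0 : Tendsto (fun k : ℕ =>
      Real.exp ((Real.log (2*G) + k*Real.log P - W k)/k)) atTop (nhds 0) :=
    Real.tendsto_exp_atBot.comp hφ
  apply tendsto_of_tendsto_of_tendsto_of_le_of_le' tendsto_const_nhds hexp0
  · filter_upwards with k
    exact Real.rpow_nonneg (Real.sqrt_nonneg _) _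
  · filter_upwards [eventually_ge_atTop 6] with k hk6
    have h1 := hbd k hk6
    calc Real.sqrt ((g1 k)^2 + (g2 k)^2) ^ ((1:ℝ)/k)
        ≤ (Real.exp (Real.log (2*G) + k*Real.log P - W k)) ^ ((1:ℝ)/k) :=
          Real.rpow_le_rpow (Real.sqrt_nonneg _) h1 (by positivity)
    _ = Real.exp ((Real.log (2*G) + k*Real.log P - W k)/k) := by
        rw [← Real.exp_mul, mul_one_div]
end

section
/- Let n ≥ 2, let λ₁ ≤ λ₂ ≤ ⋯ ≤ λₙ be positive reals, let g ∈ ℝⁿ, let l be an integer with 1 ≤ l ≤ n−1, and let ε > 0. If Σ_{i=1}^{l} (g⁽ⁱ⁾)² ≤ ε and (g⁽ˡ⁺¹⁾)² ≥ 2ε, then Σ_{i=1}^{n} λᵢ (g⁽ⁱ⁾)² ≥ (2/3)·λ_{l+1}·Σ_{i=1}^{n} (g⁽ⁱ⁾)². Equivalently, the reciprocal of the long BB stepsize, (gᵀAg)/(gᵀg) with A = diag(λ₁,…,λₙ), is at least (2/3)λ_{l+1}. (This is the key inequality verifying part (ii) of Property (A).) -/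
theorem stmt_18 (n : ℕ) (hn : 2 ≤ n)
    (lam : Fin n → ℝ) (hpos : ∀ i, 0 < lam i) (hmono : Monotone lam)
    (g : Fin n → ℝ)
    (l : ℕ) (hl1 : 1 ≤ l) (hl2 : l ≤ n - 1)
    (ε : ℝ) (hε : 0 < ε)
    (hsmall : ∑ i ∈ Finset.univ.filter (fun i : Fin n => (i : ℕ) < l), g i ^ 2 ≤ ε)
    (hbig : 2 * ε ≤ g ⟨l, by omega⟩ ^ 2) :
    (2 / 3) * lam ⟨l, by omega⟩ * ∑ i, g i ^ 2 ≤ ∑ i, lam i * g i ^ 2 := by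
  set il : Fin n := ⟨l, by omega⟩ with hil
  set S1 := ∑ i ∈ Finset.univ.filter (fun i : Fin n => (i : ℕ) < l), g i ^ 2 with hS1
  set S2 := ∑ i ∈ Finset.univ.filter (fun i : Fin n => ¬ (i : ℕ) < l), g i ^ 2 with hS2
  have hsplit : ∑ i, g i ^ 2 = S1 + S2 := by
    rw [hS1, hS2, Finset.sum_filter_add_sum_filter_not]
  -- g il ^ 2 ≤ S2
  have hmem : il ∈ Finset.univ.filter (fun i : Fin n => ¬ (i : ℕ) < l) := by
    simp [hil]
  have hgl : g il ^ 2 ≤ S2 :=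
    Finset.single_le_sum (fun i _ => sq_nonneg (g i)) hmem
  -- λ_l * S2 ≤ ∑ over complement of lam i * g i ^2
  have h2 : lam il * S2 ≤ ∑ i ∈ Finset.univ.filter (fun i : Fin n => ¬ (i : ℕ) < l),
      lam i * g i ^ 2 := by
    rw [hS2, Finset.mul_sum]
    refine Finset.sum_le_sum fun i hi => ?_
    have hli : il ≤ i := by
      simp only [Finset.mem_filter] at hi
      exact Fin.mk_le_of_le_val (by omega)
    exact mul_le_mul_of_nonneg_right (hmono hli) (sq_nonneg _)
  have h3 : ∑ i ∈ Finset.univ.filter (fun i : Fin n => ¬ (i : ℕ) < l), lam i * g i ^ 2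
      ≤ ∑ i, lam i * g i ^ 2 := by
    refine Finset.sum_le_sum_of_subset_of_nonneg (Finset.filter_subset _ _) ?_
    exact fun i _ _ => mul_nonneg (hpos i).le (sq_nonneg _)
  have hS1ε : S1 ≤ ε := hsmall
  have hS2ε : 2 * ε ≤ S2 := le_trans hbig hgl
  have hlampos : 0 < lam il := hpos il
  rw [hsplit]
  nlinarith [mul_le_mul_of_nonneg_left hS1ε hlampos.le,
    mul_le_mul_of_nonneg_left hS2ε hlampos.le]
end
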